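/- arXiv:2105.05406 — 5 statements merged into one kernel-verified Lean document; each statement's English description precedes it below -/
import Mathlib

section
/- Let d ≥ 2 and let A and B be k×k matrices with entries in {0,1} such that B is irreducible and A > B (i.e., A_{i,j} ≥ B_{i,j} for all i,j and A_{i',j'} > B_{i',j'} for at least one pair (i',j')). Then there exists N ≥ 1 such that p_{A;i}(N) > p_{B;i}(N) for every 1 ≤ i ≤ k. -/
open Filter Real

/-- `treeP d M n i` = number of `n`-blocks of the hom Markov tree-shift `T_M`
on the `d`-tree whose root label is `i`. -/
def treeP (d : ℕ) {ι : Type} [Fintype ι] (M : Matrix ι ι ℕ) : ℕ → ι → ℕ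
  | 0, _ => 1
  | n + 1, i => (∑ j, M i j * treeP d M n j) ^ d

/-- `|Δ_n| = 1 + d + ⋯ + d^n`. -/
def deltaCard (d n : ℕ) : ℕ := ∑ i ∈ Finset.range (n + 1), d ^ i

/-- Topological entropy of the hom Markov tree-shift `T_M` on the `d`-tree. -/
noncomputable def treeEntropy (d : ℕ) {ι : Type} [Fintype ι] (M : Matrix ι ι ℕ) : ℝ :=
  Filter.limsup (fun n => Real.log (∑ i, treeP d M n i) / (deltaCard d n : ℝ)) Filter.atTop

/-- `M` has entries in `{0,1}`. -/
def IsBinary {ι : Type} [Fintype ι] (M : Matrix ι ι ℕ) : Prop := ∀ i j, M i j ≤ 1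

/-- `M` is irreducible. -/
def MatIrreducible {ι : Type} [Fintype ι] [DecidableEq ι] (M : Matrix ι ι ℕ) : Prop :=
  ∀ i j, ∃ n, 1 ≤ n ∧ 0 < (M ^ n) i j

/-- `M` is the block matrix `[[E_a, R],[O, E_b]]` with `R` binary of constant row sum `l`. -/
def IsMabl (a b l : ℕ) (M : Matrix (Fin (a + b)) (Fin (a + b)) ℕ) : Prop :=
  (∀ i j, M i j ≤ 1) ∧
  (∀ i j : Fin (a + b), (i : ℕ) < a → (j : ℕ) < a → M i j = 1) ∧
  (∀ i j : Fin (a + b), a ≤ (i : ℕ) → a ≤ (j : ℕ) → M i j = 1) ∧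
  (∀ i j : Fin (a + b), a ≤ (i : ℕ) → (j : ℕ) < a → M i j = 0) ∧
  (∀ i : Fin (a + b), (i : ℕ) < a → (∑ j : Fin (a + b), if a ≤ (j : ℕ) then M i j else 0) = l)


section Aux

variable {d k : ℕ} {A B : Matrix (Fin k) (Fin k) ℕ}

lemma treeP_mono (hle : ∀ i j, B i j ≤ A i j) :
    ∀ n i, treeP d B n i ≤ treeP d A n i := by
  intro n
  induction n with
  | zero => intro i; simp [treeP]
  | succ n ih =>
    intro i
    simp only [treeP]
    refine Nat.pow_le_pow_left (Finset.sum_le_sum fun j _ => ?_) d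
    exact Nat.mul_le_mul (hle i j) (ih j)

lemma row_pos (hirr : MatIrreducible B) (i : Fin k) : ∃ j, 0 < B i j := by
  obtain ⟨m, hm1, hm⟩ := hirr i i
  obtain ⟨m', rfl⟩ : ∃ m', m = m' + 1 := ⟨m - 1, by omega⟩
  rw [pow_succ'] at hm
  have : (B * B ^ m') i i = ∑ j, B i j * (B ^ m') j i := rfl
  rw [this] at hm
  by_contra h
  push_neg at h
  have : ∀ j ∈ Finset.univ, B i j * (B ^ m') j i = 0 := by
    intro j _
    simp [Nat.le_zero.mp (h j)]
  rw [Finset.sum_eq_zero this] at hm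
  exact absurd hm (lt_irrefl 0)

lemma treeP_pos (hirr : MatIrreducible B) : ∀ n i, 1 ≤ treeP d B n i := by
  intro n
  induction n with
  | zero => intro i; simp [treeP]
  | succ n ih =>
    intro i
    simp only [treeP]
    obtain ⟨j, hj⟩ := row_pos hirr i
    have h1 : 1 ≤ B i j * treeP d B n j := Nat.mul_pos hj (ih j)
    have h2 : 1 ≤ ∑ j', B i j' * treeP d B n j' :=
      le_trans h1 (Finset.single_le_sum (f := fun j' => B i j' * treeP d B n j')
        (fun j' _ => Nat.zero_le _) (Finset.mem_univ j))
    exact Nat.one_le_pow _ _ h2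

lemma treeP_step (hd : 2 ≤ d) (hle : ∀ i j, B i j ≤ A i j) {i j n}
    (hij : 0 < B i j) (hstrict : treeP d B n j < treeP d A n j) :
    treeP d B (n + 1) i < treeP d A (n + 1) i := by
  simp only [treeP]
  refine Nat.pow_lt_pow_left ?_ (by omega)
  refine Finset.sum_lt_sum (fun j' _ => Nat.mul_le_mul (hle i j') (treeP_mono hle n j'))
    ⟨j, Finset.mem_univ j, ?_⟩
  calc B i j * treeP d B n j < B i j * treeP d A n j := by
        exact mul_lt_mul_of_pos_left hstrict hij
    _ ≤ A i j * treeP d A n j := Nat.mul_le_mul_right _ (hle i j)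

lemma treeP_propagate (hd : 2 ≤ d) (hle : ∀ i j, B i j ≤ A i j) :
    ∀ (m : ℕ) (i j : Fin k) (n : ℕ), 0 < (B ^ m) i j →
      treeP d B n j < treeP d A n j → treeP d B (n + m) i < treeP d A (n + m) i := by
  intro m
  induction m with
  | zero =>
    intro i j n hij hstrict
    have : (B ^ 0) i j = if i = j then 1 else 0 := by
      simp [Matrix.one_apply]
    rw [this] at hij
    by_cases h : i = j
    · subst h; simpa using hstrict
    · simp [h] at hij
  | succ m ih =>
    intro i j n hij hstrict
    rw [pow_succ'] at hij
    have : (B * B ^ m) i j = ∑ j', B i j' * (B ^ m) j' j := rfl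
    rw [this] at hij
    have hex : ∃ j', 0 < B i j' ∧ 0 < (B ^ m) j' j := by
      by_contra h
      push_neg at h
      have : ∀ j' ∈ Finset.univ, B i j' * (B ^ m) j' j = 0 := by
        intro j' _
        rcases Nat.eq_zero_or_pos (B i j') with h0 | h0
        · simp [h0]
        · simp [Nat.le_zero.mp (h j' h0)]
      rw [Finset.sum_eq_zero this] at hij
      exact absurd hij (lt_irrefl 0)
    obtain ⟨j', hBj', hj'⟩ := hex
    have := ih j' j n hj' hstrict
    have := treeP_step hd hle (j := j') (n := n + m) hBj' this
    simpa [Nat.add_assoc, Nat.add_comm m 1] using this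

end Aux

/-- **Lemma 2.1.** If `B` is binary irreducible and `A > B` entrywise (both binary), then
there is `N ≥ 1` with `p_{A;i}(N) > p_{B;i}(N)` for every root label `i`. -/
theorem exists_block_count_lt {d k : ℕ} (hd : 2 ≤ d)
    (A B : Matrix (Fin k) (Fin k) ℕ) (hA : IsBinary A) (hB : IsBinary B)
    (hirr : MatIrreducible B)
    (hle : ∀ i j, B i j ≤ A i j) (hlt : ∃ i j, B i j < A i j) :
    ∃ N, 1 ≤ N ∧ ∀ i : Fin k, treeP d B N i < treeP d A N i := by
  obtain ⟨i0, j0, hij0⟩ := hlt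
  have hB0 : B i0 j0 = 0 := by have := hA i0 j0; omega
  -- strict at i0 at every level n+1
  have hstrict : ∀ n, treeP d B (n + 1) i0 < treeP d A (n + 1) i0 := by
    intro n
    simp only [treeP]
    refine Nat.pow_lt_pow_left ?_ (by omega)
    refine Finset.sum_lt_sum (fun j' _ => Nat.mul_le_mul (hle i0 j') (treeP_mono hle n j'))
      ⟨j0, Finset.mem_univ j0, ?_⟩
    have h1 : 1 ≤ treeP d A n j0 := le_trans (treeP_pos hirr n j0) (treeP_mono hle n j0)
    have h2 : 1 ≤ A i0 j0 := by omega
    calc B i0 j0 * treeP d B n j0 = 0 := by simp [hB0]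
      _ < A i0 j0 * treeP d A n j0 := by positivity
  choose m hm1 hm2 using fun i => hirr i i0
  set S := Finset.univ.sup m with hS
  refine ⟨S + 1, by omega, fun i => ?_⟩
  have hmi : m i ≤ S := Finset.le_sup (Finset.mem_univ i)
  have := treeP_propagate hd hle (m i) i i0 (S - m i + 1) (hm2 i) (hstrict (S - m i))
  have heq : S - m i + 1 + m i = S + 1 := by omega
  rwa [heq] at this
end

section
/- Let d ≥ 2 and let A and B be k×k matrices with entries in {0,1} such that B is irreducible and A > B (i.e., A_{i,j} ≥ B_{i,j} for all i,j with strict inequality for at least one pair). Then h(T_A) > h(T_B). -/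
open Filter Real

/-! ### Auxiliary lemmas -/

lemma deltaCard_zero (d : ℕ) : deltaCard d 0 = 1 := by simp [deltaCard]

lemma deltaCard_succ (d n : ℕ) : deltaCard d (n + 1) = deltaCard d n * d + 1 := by
  rw [deltaCard, Finset.sum_range_succ' (fun i => d ^ i) (n + 1)]
  simp only [pow_succ, pow_zero]
  rw [← Finset.sum_mul]
  rfl

lemma one_le_deltaCard (d n : ℕ) : 1 ≤ deltaCard d n := by
  induction n with
  | zero => simp [deltaCard_zero]
  | succ n ih => rw [deltaCard_succ]; omega

lemma deltaCard_succ_le_pow {d : ℕ} (hd : 2 ≤ d) (n : ℕ) :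
    deltaCard d n + 1 ≤ d ^ (n + 1) := by
  induction n with
  | zero =>
    rw [deltaCard_zero, pow_one]; omega
  | succ n ih =>
    rw [deltaCard_succ, pow_succ]
    nlinarith [ih]

lemma deltaCard_le_pow {d : ℕ} (hd : 2 ≤ d) (n : ℕ) : deltaCard d n ≤ d ^ (n + 1) := by
  have := deltaCard_succ_le_pow hd n; omega

/-- entrywise upper bound for binary matrices -/
lemma treeP_le_pow {d k : ℕ} (M : Matrix (Fin k) (Fin k) ℕ) (hM : IsBinary M) :
    ∀ n i, treeP d M n i ≤ k ^ (deltaCard d n - 1) := by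
  intro n
  induction n with
  | zero => intro i; simp [treeP, deltaCard_zero]
  | succ n ih =>
    intro i
    simp only [treeP]
    have hS : (∑ j, M i j * treeP d M n j) ≤ k ^ deltaCard d n := by
      calc (∑ j, M i j * treeP d M n j)
          ≤ ∑ _j : Fin k, k ^ (deltaCard d n - 1) := by
            apply Finset.sum_le_sum
            intro j _
            calc M i j * treeP d M n j ≤ 1 * treeP d M n j :=
                  Nat.mul_le_mul_right _ (hM i j)
              _ = treeP d M n j := one_mul _
              _ ≤ k ^ (deltaCard d n - 1) := ih j
        _ = k * k ^ (deltaCard d n - 1) := by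
            rw [Finset.sum_const, Finset.card_univ, Fintype.card_fin, smul_eq_mul]
        _ = k ^ (deltaCard d n - 1 + 1) := (pow_succ' k _).symm
        _ = k ^ deltaCard d n := by
            have := one_le_deltaCard d n; congr 1; omega
    calc (∑ j, M i j * treeP d M n j) ^ d ≤ (k ^ deltaCard d n) ^ d :=
          Nat.pow_le_pow_left hS d
      _ = k ^ (deltaCard d n * d) := by rw [← pow_mul]
      _ = k ^ (deltaCard d (n+1) - 1) := by rw [deltaCard_succ]; simp

lemma sum_treeP_le {d k : ℕ} (M : Matrix (Fin k) (Fin k) ℕ) (hM : IsBinary M) (n : ℕ) :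
    (∑ i, treeP d M n i) ≤ k ^ deltaCard d n := by
  calc (∑ i, treeP d M n i) ≤ ∑ _i : Fin k, k ^ (deltaCard d n - 1) :=
        Finset.sum_le_sum fun i _ => treeP_le_pow M hM n i
    _ = k * k ^ (deltaCard d n - 1) := by
        rw [Finset.sum_const, Finset.card_univ, Fintype.card_fin, smul_eq_mul]
    _ = k ^ (deltaCard d n - 1 + 1) := (pow_succ' k _).symm
    _ = k ^ deltaCard d n := by
        have := one_le_deltaCard d n; congr 1; omega

/-- **Theorem 2.2 (strict monotonicity).** If `B` is binary irreducible and `A > B`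
entrywise (both binary), then `h(T_A) > h(T_B)`. -/
theorem treeEntropy_strictMono {d k : ℕ} (hd : 2 ≤ d)
    (A B : Matrix (Fin k) (Fin k) ℕ) (hA : IsBinary A) (hB : IsBinary B)
    (hirr : MatIrreducible B)
    (hle : ∀ i j, B i j ≤ A i j) (hlt : ∃ i j, B i j < A i j) :
    treeEntropy d B < treeEntropy d A := by
  classical
  obtain ⟨i0, j0, hij⟩ := hlt
  have hd0 : d ≠ 0 := by omega
  -- every row of B has a positive entry
  have hrow : ∀ i, ∃ j, 0 < B i j := by
    intro i
    obtain ⟨n, hn1, hpos⟩ := hirr i i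
    obtain ⟨m, rfl⟩ : ∃ m, n = m + 1 := ⟨n - 1, by omega⟩
    rw [pow_succ', Matrix.mul_apply] at hpos
    by_contra h
    push_neg at h
    simp only [Nat.le_zero] at h
    rw [Finset.sum_eq_zero (fun j _ => by rw [h j, zero_mul])] at hpos
    exact lt_irrefl 0 hpos
  -- treeP of B is at least 1
  have hBpos : ∀ n i, 1 ≤ treeP d B n i := by
    intro n
    induction n with
    | zero => intro i; simp [treeP]
    | succ n ih =>
      intro i
      obtain ⟨j, hj⟩ := hrow i
      have h1 : 0 < ∑ j', B i j' * treeP d B n j' :=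
        lt_of_lt_of_le (Nat.mul_pos hj (ih j))
          (Finset.single_le_sum (f := fun j' => B i j' * treeP d B n j')
            (fun _ _ => Nat.zero_le _) (Finset.mem_univ j))
      simpa only [treeP] using Nat.one_le_pow _ _ h1
  -- monotonicity
  have hmono : ∀ n i, treeP d B n i ≤ treeP d A n i := by
    intro n
    induction n with
    | zero => intro i; simp [treeP]
    | succ n ih =>
      intro i
      simp only [treeP]
      exact Nat.pow_le_pow_left
        (Finset.sum_le_sum fun j _ => Nat.mul_le_mul (hle i j) (ih j)) d
  have hApos : ∀ n i, 1 ≤ treeP d A n i := fun n i => le_trans (hBpos n i) (hmono n i)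
  -- one-step propagation of strictness
  have hstep : ∀ n i j, 0 < B i j → treeP d B n j < treeP d A n j →
      treeP d B (n + 1) i < treeP d A (n + 1) i := by
    intro n i j hBij hlt'
    simp only [treeP]
    apply Nat.pow_lt_pow_left _ hd0
    apply Finset.sum_lt_sum (fun l _ => Nat.mul_le_mul (hle i l) (hmono n l))
    refine ⟨j, Finset.mem_univ j, ?_⟩
    calc B i j * treeP d B n j < B i j * treeP d A n j :=
          mul_lt_mul_of_pos_left hlt' hBij
      _ ≤ A i j * treeP d A n j := mul_le_mul_left (hle i j) _
  -- strictness at i0 at every positive depth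
  have hi0 : ∀ n, treeP d B (n + 1) i0 < treeP d A (n + 1) i0 := by
    intro n
    simp only [treeP]
    apply Nat.pow_lt_pow_left _ hd0
    apply Finset.sum_lt_sum (fun l _ => Nat.mul_le_mul (hle i0 l) (hmono n l))
    refine ⟨j0, Finset.mem_univ j0, ?_⟩
    calc B i0 j0 * treeP d B n j0 ≤ B i0 j0 * treeP d A n j0 :=
          mul_le_mul_right (hmono n j0) _
      _ < A i0 j0 * treeP d A n j0 :=
          mul_lt_mul_of_pos_right hij (lt_of_lt_of_le one_pos (hApos n j0))
  -- propagation along walks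
  have hwalk : ∀ m i j n, 0 < (B ^ m) i j → treeP d B n j < treeP d A n j →
      treeP d B (n + m) i < treeP d A (n + m) i := by
    intro m
    induction m with
    | zero =>
      intro i j n h hlt'
      have hij' : i = j := by
        by_contra hne
        rw [pow_zero, Matrix.one_apply_ne hne] at h
        exact lt_irrefl 0 h
      subst hij'
      exact hlt'
    | succ m ih =>
      intro i j n h hlt'
      rw [pow_succ', Matrix.mul_apply] at h
      obtain ⟨l, -, hl⟩ := Finset.exists_ne_zero_of_sum_ne_zero h.ne'
      have hBil : 0 < B i l := Nat.pos_of_ne_zero (fun hz => hl (by rw [hz, zero_mul]))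
      have hml : 0 < (B ^ m) l j :=
        Nat.pos_of_ne_zero (fun hz => hl (by rw [hz, mul_zero]))
      exact hstep (n + m) i l hBil (ih l j n hml hlt')
  -- a common depth K with strictness everywhere
  choose m hm1 hm2 using fun i => hirr i i0
  set K : ℕ := 1 + Finset.univ.sup m with hK
  have hKstrict : ∀ i, treeP d B K i < treeP d A K i := by
    intro i
    have hmi : m i ≤ Finset.univ.sup m := Finset.le_sup (Finset.mem_univ i)
    obtain ⟨t, ht⟩ : ∃ t, K - m i = t + 1 := ⟨K - m i - 1, by omega⟩
    have hKi : K = (t + 1) + m i := by omega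
    rw [hKi]
    exact hwalk (m i) i i0 (t + 1) (hm2 i) (hi0 t)
  -- the ratio γ
  have hne : (Finset.univ : Finset (Fin k)).Nonempty := ⟨i0, Finset.mem_univ i0⟩
  set γ : ℝ := Finset.univ.inf' hne (fun i => (treeP d A K i : ℝ) / (treeP d B K i : ℝ))
    with hγ
  have hγ1 : 1 < γ := by
    rw [hγ, Finset.lt_inf'_iff]
    intro i _
    have h1 : (1 : ℝ) ≤ (treeP d B K i : ℝ) := by exact_mod_cast hBpos K i
    rw [lt_div_iff₀ (lt_of_lt_of_le one_pos h1), one_mul]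
    exact_mod_cast hKstrict i
  have hγ0 : (0 : ℝ) < γ := lt_trans one_pos hγ1
  have hγle : ∀ i, γ * (treeP d B K i : ℝ) ≤ (treeP d A K i : ℝ) := by
    intro i
    have h1 : (1 : ℝ) ≤ (treeP d B K i : ℝ) := by exact_mod_cast hBpos K i
    have h0 : (0 : ℝ) < (treeP d B K i : ℝ) := lt_of_lt_of_le one_pos h1
    have h2 : γ ≤ (treeP d A K i : ℝ) / (treeP d B K i : ℝ) :=
      Finset.inf'_le _ (Finset.mem_univ i)
    calc γ * (treeP d B K i : ℝ)
        ≤ ((treeP d A K i : ℝ) / (treeP d B K i : ℝ)) * (treeP d B K i : ℝ) :=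
          mul_le_mul_of_nonneg_right h2 h0.le
      _ = (treeP d A K i : ℝ) := div_mul_cancel₀ _ h0.ne'
  -- main inequality
  have hmain : ∀ t i, γ ^ (d ^ t) * (treeP d B (t + K) i : ℝ) ≤ (treeP d A (t + K) i : ℝ) := by
    intro t
    induction t with
    | zero => intro i; simpa using hγle i
    | succ t ih =>
      intro i
      have hinner : γ ^ d ^ t * (∑ j, (B i j : ℝ) * (treeP d B (t + K) j : ℝ))
          ≤ ∑ j, (A i j : ℝ) * (treeP d A (t + K) j : ℝ) := by
        rw [Finset.mul_sum]
        apply Finset.sum_le_sum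
        intro j _
        have h1 : γ ^ d ^ t * ((B i j : ℝ) * (treeP d B (t + K) j : ℝ))
            = (B i j : ℝ) * (γ ^ d ^ t * (treeP d B (t + K) j : ℝ)) := by ring
        rw [h1]
        calc (B i j : ℝ) * (γ ^ d ^ t * (treeP d B (t + K) j : ℝ))
            ≤ (B i j : ℝ) * (treeP d A (t + K) j : ℝ) :=
              mul_le_mul_of_nonneg_left (ih j) (by positivity)
          _ ≤ (A i j : ℝ) * (treeP d A (t + K) j : ℝ) := by
              apply mul_le_mul_of_nonneg_right _ (by positivity)
              exact_mod_cast hle i j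
      rw [Nat.succ_add]
      simp only [treeP]
      push_cast
      rw [pow_succ d t, pow_mul, ← mul_pow]
      exact pow_le_pow_left₀ (by positivity) hinner d
  -- summed version
  have hsum : ∀ n, K ≤ n →
      γ ^ (d ^ (n - K)) * (∑ i, (treeP d B n i : ℝ)) ≤ ∑ i, (treeP d A n i : ℝ) := by
    intro n hn
    obtain ⟨t, rfl⟩ : ∃ t, n = t + K := ⟨n - K, by omega⟩
    have ht : t + K - K = t := by omega
    rw [ht]
    push_cast
    rw [Finset.mul_sum]
    exact Finset.sum_le_sum fun i _ => hmain t i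
  -- positivity of the sums
  have hSB1 : ∀ n, (1 : ℝ) ≤ ∑ i, (treeP d B n i : ℝ) := by
    intro n
    have : 1 ≤ ∑ i, treeP d B n i :=
      le_trans (hBpos n i0)
        (Finset.single_le_sum (fun _ _ => Nat.zero_le _) (Finset.mem_univ i0))
    exact_mod_cast this
  have hSA1 : ∀ n, (1 : ℝ) ≤ ∑ i, (treeP d A n i : ℝ) := by
    intro n
    have : 1 ≤ ∑ i, treeP d A n i :=
      le_trans (hApos n i0)
        (Finset.single_le_sum (fun _ _ => Nat.zero_le _) (Finset.mem_univ i0))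
    exact_mod_cast this
  have hΔpos : ∀ n, (0 : ℝ) < (deltaCard d n : ℝ) := by
    intro n
    have := one_le_deltaCard d n
    exact_mod_cast Nat.lt_of_lt_of_le Nat.zero_lt_one this
  -- the entropy sequences
  set fA : ℕ → ℝ := fun n => Real.log (∑ i, treeP d A n i) / (deltaCard d n : ℝ) with hfA
  set fB : ℕ → ℝ := fun n => Real.log (∑ i, treeP d B n i) / (deltaCard d n : ℝ) with hfB
  -- bounds
  have hfA_ub : ∀ n, fA n ≤ Real.log k := by
    intro n
    have hlog : Real.log (∑ i, treeP d A n i) ≤ (deltaCard d n : ℝ) * Real.log k := by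
      calc Real.log (∑ i, treeP d A n i) ≤ Real.log ((k : ℝ) ^ deltaCard d n) := by
            apply Real.log_le_log (lt_of_lt_of_le one_pos (hSA1 n))
            exact_mod_cast sum_treeP_le A hA n
        _ = (deltaCard d n : ℝ) * Real.log k := Real.log_pow _ _
    rw [hfA, div_le_iff₀ (hΔpos n)]
    calc Real.log (∑ i, treeP d A n i) ≤ (deltaCard d n : ℝ) * Real.log k := hlog
      _ = Real.log k * (deltaCard d n : ℝ) := mul_comm _ _
  have hfB_lb : ∀ n, 0 ≤ fB n := by
    intro n
    exact div_nonneg (Real.log_nonneg (hSB1 n)) (hΔpos n).le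
  -- the gap constant
  set c : ℝ := Real.log γ / (d : ℝ) ^ (K + 1) with hc
  have hcpos : 0 < c := div_pos (Real.log_pos hγ1) (by positivity)
  -- key eventual inequality
  have hkey : ∀ n, K ≤ n → fB n + c ≤ fA n := by
    intro n hn
    have hlogA : (d ^ (n - K) : ℕ) * Real.log γ + Real.log (∑ i, treeP d B n i)
        ≤ Real.log (∑ i, treeP d A n i) := by
      have h1 : Real.log (γ ^ (d ^ (n - K)) * (∑ i, (treeP d B n i : ℝ)))
          ≤ Real.log (∑ i, (treeP d A n i : ℝ)) := by
        apply Real.log_le_log _ (hsum n hn)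
        exact mul_pos (by positivity) (lt_of_lt_of_le one_pos (hSB1 n))
      rwa [Real.log_mul (by positivity) (lt_of_lt_of_le one_pos (hSB1 n)).ne',
        Real.log_pow] at h1
    have h2 : c ≤ ((d : ℝ) ^ (n - K) * Real.log γ) / (deltaCard d n : ℝ) := by
      rw [hc, div_le_div_iff₀ (by positivity) (hΔpos n)]
      have hΔ : (deltaCard d n : ℝ) ≤ (d : ℝ) ^ (n + 1) := by
        exact_mod_cast deltaCard_le_pow hd n
      have hexp : (d : ℝ) ^ (n - K) * (d : ℝ) ^ (K + 1) = (d : ℝ) ^ (n + 1) := by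
        rw [← pow_add]
        congr 1
        omega
      calc Real.log γ * (deltaCard d n : ℝ) ≤ Real.log γ * (d : ℝ) ^ (n + 1) :=
            mul_le_mul_of_nonneg_left hΔ (Real.log_pos hγ1).le
        _ = (d : ℝ) ^ (n - K) * Real.log γ * (d : ℝ) ^ (K + 1) := by
            rw [mul_comm (Real.log γ), mul_assoc, mul_comm (Real.log γ), ← mul_assoc, hexp,
              mul_comm]
    have h3 : fB n + ((d : ℝ) ^ (n - K) * Real.log γ) / (deltaCard d n : ℝ) ≤ fA n := by
      rw [hfA, hfB]
      rw [← add_div, div_le_div_iff₀ (hΔpos n) (hΔpos n)]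
      apply mul_le_mul_of_nonneg_right _ (hΔpos n).le
      calc Real.log (∑ i, treeP d B n i) + (d : ℝ) ^ (n - K) * Real.log γ
          = (d ^ (n - K) : ℕ) * Real.log γ + Real.log (∑ i, treeP d B n i) := by
            push_cast; ring
        _ ≤ Real.log (∑ i, treeP d A n i) := hlogA
    linarith [h2, h3]
  -- limsup bookkeeping
  have hBddA : IsBoundedUnder (· ≤ ·) atTop fA :=
    isBoundedUnder_of ⟨Real.log k, hfA_ub⟩
  have hBddB : IsBoundedUnder (· ≤ ·) atTop fB := by
    apply isBoundedUnder_of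
    refine ⟨Real.log k, fun n => ?_⟩
    have hlog : Real.log (∑ i, treeP d B n i) ≤ (deltaCard d n : ℝ) * Real.log k := by
      calc Real.log (∑ i, treeP d B n i) ≤ Real.log ((k : ℝ) ^ deltaCard d n) := by
            apply Real.log_le_log (lt_of_lt_of_le one_pos (hSB1 n))
            exact_mod_cast sum_treeP_le B hB n
        _ = (deltaCard d n : ℝ) * Real.log k := Real.log_pow _ _
    rw [hfB, div_le_iff₀ (hΔpos n)]
    calc Real.log (∑ i, treeP d B n i) ≤ (deltaCard d n : ℝ) * Real.log k := hlog
      _ = Real.log k * (deltaCard d n : ℝ) := mul_comm _ _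
  have hCobB : IsCoboundedUnder (· ≤ ·) atTop fB :=
    isCoboundedUnder_le_of_le atTop (x := 0) hfB_lb
  have hCobBc : IsCoboundedUnder (· ≤ ·) atTop (fun n => fB n + c) :=
    isCoboundedUnder_le_of_le atTop (x := c) (fun n => by linarith [hfB_lb n])
  have hEv : ∀ᶠ n in atTop, fB n + c ≤ fA n :=
    eventually_atTop.2 ⟨K, hkey⟩
  have h1 : treeEntropy d B + c ≤ treeEntropy d A := by
    have he1 : treeEntropy d B + c = Filter.limsup (fun n => fB n + c) atTop :=
      (limsup_add_const atTop fB c hBddB hCobB).symm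
    have he2 : Filter.limsup (fun n => fB n + c) atTop ≤ treeEntropy d A :=
      limsup_le_limsup hEv hCobBc hBddA
    calc treeEntropy d B + c = Filter.limsup (fun n => fB n + c) atTop := he1
      _ ≤ treeEntropy d A := he2
  linarith
end

section
/- Let d ≥ 2, b > a ≥ 1, 0 < l ≤ b, and suppose a + l ≤ b. Then h(T_{M(a,b;l)}) = log b (for any choice of the block R with row sums l). -/
open Filter Real

/-- **Theorem 3.2 (a).** If `b > a ≥ 1`, `0 < l ≤ b` and `a + l ≤ b`,
then `h(T_{M(a,b;l)}) = log b`. -/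
theorem treeEntropy_Mabl_of_add_le {d a b l : ℕ} (hd : 2 ≤ d)
    (ha : 1 ≤ a) (hab : a < b) (hl : 0 < l) (hlb : l ≤ b) (hsum : a + l ≤ b)
    (M : Matrix (Fin (a + b)) (Fin (a + b)) ℕ) (hM : IsMabl a b l M) :
    treeEntropy d M = Real.log b := by
  obtain ⟨hbin, hE1, hE2, hO, hR⟩ := hM
  have hb : 0 < b := lt_of_le_of_lt (Nat.zero_le a) hab
  -- deltaCard facts
  have hΔ1 : ∀ n, 1 ≤ deltaCard d n := by
    intro n
    unfold deltaCard
    calc 1 = ∑ i ∈ Finset.range 1, d ^ i := by simp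
    _ ≤ _ := Finset.sum_le_sum_of_subset (by simp)
  have hΔrec : ∀ n, deltaCard d (n+1) = d * deltaCard d n + 1 := by
    intro n
    unfold deltaCard
    rw [Finset.sum_range_succ']
    simp [pow_succ, Finset.mul_sum, mul_comm]
  have hΔge : ∀ n, n + 1 ≤ deltaCard d n := by
    intro n
    unfold deltaCard
    calc n + 1 = ∑ _i ∈ Finset.range (n+1), 1 := by simp
    _ ≤ _ := Finset.sum_le_sum fun i _ => Nat.one_le_pow _ _ (by omega)
  -- filter cardinalities
  have hcard_ge : (Finset.univ.filter fun j : Fin (a+b) => a ≤ (j:ℕ)).card = b := by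
    rw [Finset.card_filter, Fin.sum_univ_eq_sum_range (fun k => if a ≤ k then 1 else 0),
      ← Finset.card_filter]
    have h : (Finset.range (a+b)).filter (fun k => a ≤ k) = Finset.Ico a (a+b) := by
      ext k; simp [Finset.mem_Ico]; omega
    rw [h, Nat.card_Ico]; omega
  have hcard_not : (Finset.univ.filter fun j : Fin (a+b) => ¬ a ≤ (j:ℕ)).card = a := by
    rw [Finset.card_filter, Fin.sum_univ_eq_sum_range (fun k => if ¬ a ≤ k then 1 else 0),
      ← Finset.card_filter]
    have h : (Finset.range (a+b)).filter (fun k => ¬ a ≤ k) = Finset.range a := by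
      ext k; simp; omega
    rw [h, Finset.card_range]
  set Q : ℕ → ℕ := fun n => b ^ (deltaCard d n - 1) with hQ
  have key : ∀ n, (∀ i : Fin (a+b), a ≤ (i:ℕ) → treeP d M n i = Q n) ∧
      (∀ i : Fin (a+b), (i:ℕ) < a → treeP d M n i ≤ Q n) := by
    intro n
    induction n with
    | zero =>
      constructor <;> intro i hi <;> simp [treeP, hQ, deltaCard]
    | succ n ih =>
      obtain ⟨ih1, ih2⟩ := ih
      have hQsucc : Q (n+1) = (b * Q n) ^ d := by
        have h1 : deltaCard d (n+1) - 1 = d * deltaCard d n := by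
          rw [hΔrec n]; omega
        have h2 : deltaCard d n - 1 + 1 = deltaCard d n := by
          have := hΔ1 n; omega
        simp only [hQ]
        rw [h1, pow_mul']
        congr 1
        rw [← pow_succ', h2]
      have hsum_ge : ∀ i : Fin (a+b), a ≤ (i:ℕ) →
          (∑ j, M i j * treeP d M n j) = b * Q n := by
        intro i hi
        have h : ∀ j : Fin (a+b), M i j * treeP d M n j
            = if a ≤ (j:ℕ) then Q n else 0 := by
          intro j
          by_cases hj : a ≤ (j:ℕ)
          · simp [hj, hE2 i j hi hj, ih1 j hj]
          · simp [hj, hO i j hi (by omega)]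
        rw [Finset.sum_congr rfl (fun j _ => h j), Finset.sum_ite,
          Finset.sum_const, Finset.sum_const, hcard_ge]
        simp [mul_comm]
      constructor
      · intro i hi
        show (∑ j, M i j * treeP d M n j) ^ d = Q (n+1)
        rw [hsum_ge i hi, hQsucc]
      · intro i hi
        show (∑ j, M i j * treeP d M n j) ^ d ≤ Q (n+1)
        rw [hQsucc]
        apply Nat.pow_le_pow_left
        calc ∑ j, M i j * treeP d M n j
            ≤ ∑ j : Fin (a+b), ((if a ≤ (j:ℕ) then M i j else 0) * Q n
                + (if a ≤ (j:ℕ) then 0 else Q n)) := by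
              apply Finset.sum_le_sum
              intro j _
              by_cases hj : a ≤ (j:ℕ)
              · simp only [hj, if_true, add_zero]
                exact Nat.mul_le_mul_left _ (le_of_eq (ih1 j hj))
              · simp only [hj, if_false, zero_mul, zero_add]
                calc M i j * treeP d M n j ≤ 1 * Q n :=
                      Nat.mul_le_mul (hbin i j) (ih2 j (by omega))
                  _ = Q n := one_mul _
          _ = l * Q n + a * Q n := by
              rw [Finset.sum_add_distrib, ← Finset.sum_mul, hR i hi]
              congr 1
              rw [Finset.sum_ite, Finset.sum_const, Finset.sum_const, hcard_not]
              simp [mul_comm]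
          _ ≤ b * Q n := by
              have : l * Q n + a * Q n = (l + a) * Q n := by ring
              rw [this]
              exact Nat.mul_le_mul_right _ (by omega)
  -- total counts
  have hlow : ∀ n, b ^ (deltaCard d n) ≤ ∑ i, treeP d M n i := by
    intro n
    have hbq : b * Q n = b ^ (deltaCard d n) := by
      simp only [hQ]
      rw [← pow_succ']
      congr 1
      have := hΔ1 n; omega
    calc b ^ (deltaCard d n) = b * Q n := hbq.symm
      _ = ∑ _j ∈ Finset.univ.filter (fun j : Fin (a+b) => a ≤ (j:ℕ)), Q n := by
          rw [Finset.sum_const, hcard_ge]; simp [mul_comm]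
      _ = ∑ j ∈ Finset.univ.filter (fun j : Fin (a+b) => a ≤ (j:ℕ)), treeP d M n j :=
          Finset.sum_congr rfl (fun j hj =>
            ((key n).1 j (Finset.mem_filter.mp hj).2).symm)
      _ ≤ ∑ i, treeP d M n i :=
          Finset.sum_le_sum_of_subset (Finset.filter_subset _ _)
  have hhigh : ∀ n, (∑ i, treeP d M n i) ≤ (a+b) * b ^ (deltaCard d n) := by
    intro n
    calc ∑ i, treeP d M n i ≤ ∑ _i : Fin (a+b), Q n := by
          apply Finset.sum_le_sum
          intro i _
          by_cases hi : a ≤ (i:ℕ)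
          · exact le_of_eq ((key n).1 i hi)
          · exact (key n).2 i (by omega)
      _ = (a+b) * Q n := by
          rw [Finset.sum_const]; simp [mul_comm]
      _ ≤ (a+b) * b ^ (deltaCard d n) := by
          apply Nat.mul_le_mul_left
          exact Nat.pow_le_pow_right hb (by omega)
  -- real analysis
  have hΔposR : ∀ n, (0:ℝ) < (deltaCard d n : ℝ) := by
    intro n
    exact_mod_cast Nat.lt_of_lt_of_le Nat.zero_lt_one (hΔ1 n)
  have hbR : (1:ℝ) < (b:ℝ) := by exact_mod_cast Nat.lt_of_le_of_lt ha hab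
  set f : ℕ → ℝ := fun n =>
    Real.log (∑ i, treeP d M n i) / (deltaCard d n : ℝ) with hf
  have hlb' : ∀ n, Real.log b ≤ f n := by
    intro n
    rw [hf]
    simp only
    rw [le_div_iff₀ (hΔposR n)]
    have h1 : ((b:ℝ)) ^ (deltaCard d n) ≤ ∑ i : Fin (a+b), ((treeP d M n i : ℕ) : ℝ) := by
      exact_mod_cast hlow n
    calc Real.log b * (deltaCard d n : ℝ)
        = Real.log ((b:ℝ) ^ (deltaCard d n)) := by rw [Real.log_pow]; ring
      _ ≤ Real.log (∑ i, treeP d M n i) :=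
        Real.log_le_log (by positivity) h1
  have hub : ∀ n, f n ≤ Real.log b + Real.log (a+b) / (deltaCard d n : ℝ) := by
    intro n
    rw [hf]
    simp only
    rw [div_le_iff₀ (hΔposR n)]
    have h1 : (∑ i : Fin (a+b), ((treeP d M n i : ℕ) : ℝ))
        ≤ ((a:ℝ)+(b:ℝ)) * (b:ℝ) ^ (deltaCard d n) := by
      exact_mod_cast hhigh n
    have h2 : Real.log (∑ i, treeP d M n i)
        ≤ Real.log (a+b) + (deltaCard d n : ℝ) * Real.log b := by
      calc Real.log (∑ i, treeP d M n i)
          ≤ Real.log (((a:ℝ)+(b:ℝ)) * (b:ℝ) ^ (deltaCard d n)) := by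
            apply Real.log_le_log _ h1
            have h4 : (1:ℝ) ≤ ∑ i : Fin (a+b), ((treeP d M n i : ℕ) : ℝ) := by
              have h3 : 1 ≤ ∑ i, treeP d M n i :=
                le_trans (Nat.one_le_pow _ _ hb) (hlow n)
              exact_mod_cast h3
            linarith
        _ = Real.log (a+b) + (deltaCard d n : ℝ) * Real.log b := by
            rw [Real.log_mul (by positivity) (by positivity), Real.log_pow]
    have h3 : (Real.log b + Real.log (a+b) / (deltaCard d n : ℝ)) * (deltaCard d n : ℝ)
        = Real.log b * (deltaCard d n : ℝ) + Real.log (a+b) := by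
      have hne : (deltaCard d n : ℝ) ≠ 0 := ne_of_gt (hΔposR n)
      field_simp
    rw [h3]
    push_cast at h2 ⊢
    linarith
  have hΔtop : Tendsto (fun n => (deltaCard d n : ℝ)) atTop atTop := by
    apply tendsto_natCast_atTop_atTop.comp
    apply tendsto_atTop_mono (fun n => ?_) tendsto_id
    exact le_trans (Nat.le_succ n) (hΔge n)
  have htend : Tendsto f atTop (nhds (Real.log b)) := by
    have h0 : Tendsto (fun n => Real.log b + Real.log (a+b) / (deltaCard d n : ℝ))
        atTop (nhds (Real.log b)) := by
      have h1 : Tendsto (fun n => Real.log (a+b) / (deltaCard d n : ℝ)) atTop (nhds 0) :=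
        Tendsto.div_atTop tendsto_const_nhds hΔtop
      simpa using tendsto_const_nhds.add h1
    exact tendsto_of_tendsto_of_tendsto_of_le_of_le tendsto_const_nhds h0 hlb' hub
  unfold treeEntropy
  exact htend.limsup_eq
end

section
/- Let d = 2 and q = 3, and let M = M(a_1,a_2,a_3; l_{1,2}, l_{1,3}, l_{2,3}) be the block upper triangular matrix described in the context, with a_3 > a_1, a_3 > a_2, a_1 + l_{1,2} + l_{1,3} > a_3 and a_2 + l_{2,3} > a_3. Let f(x) = ((a_2 x + l_{2,3})/a_3)². (a) If f has no fixed point in [1,∞), then h(T_M) > log a_3. (b) If f has a fixed point in [1,∞), let x_− be the smallest fixed point of f in [1,∞) and let g(x) = ((a_1 x + l_{1,2} x_− + l_{1,3})/a_3)²; then (i) if g has no fixed point in [1,∞), h(T_M) > log a_3, and (ii) if g has a fixed point in [1,∞), h(T_M) = log a_3. -/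
open Filter Real

/-- `M` is the block upper triangular matrix with diagonal blocks the all-ones
matrices `E_{a i}` and, for `i < j`, `(i,j)`-block a binary matrix of constant
row sum `l i j`; blocks below the diagonal vanish. -/
def IsBlockMat {q : ℕ} (a : Fin q → ℕ) (l : Fin q → Fin q → ℕ)
    (M : Matrix ((i : Fin q) × Fin (a i)) ((i : Fin q) × Fin (a i)) ℕ) : Prop :=
  (∀ p r, M p r ≤ 1) ∧
  (∀ p r : (i : Fin q) × Fin (a i), p.1 = r.1 → M p r = 1) ∧
  (∀ p r : (i : Fin q) × Fin (a i), r.1 < p.1 → M p r = 0) ∧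
  (∀ p : (i : Fin q) × Fin (a i), ∀ j : Fin q, p.1 < j →
    (∑ r : Fin (a j), M p ⟨j, r⟩) = l p.1 j)

/-! ### Auxiliary material -/

open Topology

set_option linter.unusedSectionVars false

section Sequences

def p3seq (a₃ : ℕ) : ℕ → ℕ
  | 0 => 1
  | n+1 => (a₃ * p3seq a₃ n)^2

def p2seq (a₂ a₃ l₂₃ : ℕ) : ℕ → ℕ
  | 0 => 1
  | n+1 => (a₂ * p2seq a₂ a₃ l₂₃ n + l₂₃ * p3seq a₃ n)^2

def p1seq (a₁ a₂ a₃ l₁₂ l₁₃ l₂₃ : ℕ) : ℕ → ℕ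
  | 0 => 1
  | n+1 => (a₁ * p1seq a₁ a₂ a₃ l₁₂ l₁₃ l₂₃ n + l₁₂ * p2seq a₂ a₃ l₂₃ n + l₁₃ * p3seq a₃ n)^2

noncomputable def Yseq (a₂ a₃ l₂₃ : ℝ) : ℕ → ℝ
  | 0 => 1
  | n+1 => ((a₂ * Yseq a₂ a₃ l₂₃ n + l₂₃) / a₃)^2

noncomputable def Xseq (a₁ a₂ a₃ l₁₂ l₁₃ l₂₃ : ℝ) : ℕ → ℝ
  | 0 => 1
  | n+1 => ((a₁ * Xseq a₁ a₂ a₃ l₁₂ l₁₃ l₂₃ n + l₁₂ * Yseq a₂ a₃ l₂₃ n + l₁₃) / a₃)^2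

end Sequences

section Combinatorics
variable (a₁ a₂ a₃ l₁₂ l₁₃ l₂₃ : ℕ)
  (M : Matrix ((i : Fin 3) × Fin (![a₁, a₂, a₃] i)) ((i : Fin 3) × Fin (![a₁, a₂, a₃] i)) ℕ)
  (hM : IsBlockMat ![a₁, a₂, a₃] ![![0, l₁₂, l₁₃], ![0, 0, l₂₃], ![0, 0, 0]] M)

private lemma tmBlkInner (p : (i : Fin 3) × Fin (![a₁, a₂, a₃] i)) (j : Fin 3) (n v : ℕ)
    (hv : ∀ r : Fin (![a₁,a₂,a₃] j), treeP 2 M n ⟨j, r⟩ = v) :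
    ∑ r : Fin (![a₁,a₂,a₃] j), M p ⟨j, r⟩ * treeP 2 M n ⟨j, r⟩
      = (∑ r : Fin (![a₁,a₂,a₃] j), M p ⟨j, r⟩) * v := by
  rw [Finset.sum_mul]
  exact Finset.sum_congr rfl fun r _ => by rw [hv r]

include hM in
private lemma tmBlkDiag (j : Fin 3) (i2 : Fin (![a₁,a₂,a₃] j)) :
    (∑ r : Fin (![a₁, a₂, a₃] j), M ⟨j, i2⟩ ⟨j, r⟩) = ![a₁,a₂,a₃] j := by
  have : ∀ r : Fin (![a₁,a₂,a₃] j), M ⟨j,i2⟩ ⟨j,r⟩ = 1 := fun r => hM.2.1 _ _ rfl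
  simp [this]

include hM in
private lemma tmBlkLow (i j : Fin 3) (hji : j < i) (i2 : Fin (![a₁,a₂,a₃] i)) :
    (∑ r : Fin (![a₁, a₂, a₃] j), M ⟨i, i2⟩ ⟨j, r⟩) = 0 := by
  have : ∀ r : Fin (![a₁,a₂,a₃] j), M ⟨i,i2⟩ ⟨j,r⟩ = 0 := fun r => hM.2.2.1 _ _ hji
  simp [this]

include hM in
lemma treeP_eq : ∀ n,
    (∀ i2 : Fin (![a₁,a₂,a₃] (0:Fin 3)), treeP 2 M n ⟨0, i2⟩ = p1seq a₁ a₂ a₃ l₁₂ l₁₃ l₂₃ n) ∧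
    (∀ i2 : Fin (![a₁,a₂,a₃] (1:Fin 3)), treeP 2 M n ⟨1, i2⟩ = p2seq a₂ a₃ l₂₃ n) ∧
    (∀ i2 : Fin (![a₁,a₂,a₃] (2:Fin 3)), treeP 2 M n ⟨2, i2⟩ = p3seq a₃ n) := by
  intro n
  induction n with
  | zero => exact ⟨fun _ => rfl, fun _ => rfl, fun _ => rfl⟩
  | succ n ih =>
    obtain ⟨ih1, ih2, ih3⟩ := ih
    have expand : ∀ p : (i : Fin 3) × Fin (![a₁, a₂, a₃] i),
        treeP 2 M (n+1) p =
        (∑ r : Fin (![a₁,a₂,a₃] (0:Fin 3)), M p ⟨0, r⟩ * treeP 2 M n ⟨0,r⟩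
         + ∑ r : Fin (![a₁,a₂,a₃] (1:Fin 3)), M p ⟨1, r⟩ * treeP 2 M n ⟨1,r⟩
         + ∑ r : Fin (![a₁,a₂,a₃] (2:Fin 3)), M p ⟨2, r⟩ * treeP 2 M n ⟨2,r⟩)^2 := by
      intro p
      show (∑ r : (i : Fin 3) × Fin (![a₁, a₂, a₃] i), M p r * treeP 2 M n r)^2 = _
      rw [← Finset.univ_sigma_univ, Finset.sum_sigma, Fin.sum_univ_three]
    have h01 : (0:Fin 3) < 1 := by decide
    have h02 : (0:Fin 3) < 2 := by decide
    have h12 : (1:Fin 3) < 2 := by decide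
    refine ⟨fun i2 => ?_, fun i2 => ?_, fun i2 => ?_⟩
    · rw [expand, tmBlkInner a₁ a₂ a₃ M _ 0 n _ ih1, tmBlkInner a₁ a₂ a₃ M _ 1 n _ ih2,
        tmBlkInner a₁ a₂ a₃ M _ 2 n _ ih3,
        tmBlkDiag a₁ a₂ a₃ l₁₂ l₁₃ l₂₃ M hM 0 i2,
        hM.2.2.2 ⟨0, i2⟩ 1 h01, hM.2.2.2 ⟨0, i2⟩ 2 h02]
      show (![a₁,a₂,a₃] 0 * _ + ![![0, l₁₂, l₁₃], ![0, 0, l₂₃], ![0, 0, 0]] 0 1 * _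
        + ![![0, l₁₂, l₁₃], ![0, 0, l₂₃], ![0, 0, 0]] 0 2 * _)^2 = _
      simp [p1seq]
    · rw [expand, tmBlkInner a₁ a₂ a₃ M _ 0 n _ ih1, tmBlkInner a₁ a₂ a₃ M _ 1 n _ ih2,
        tmBlkInner a₁ a₂ a₃ M _ 2 n _ ih3,
        tmBlkDiag a₁ a₂ a₃ l₁₂ l₁₃ l₂₃ M hM 1 i2,
        tmBlkLow a₁ a₂ a₃ l₁₂ l₁₃ l₂₃ M hM 1 0 (by decide) i2,
        hM.2.2.2 ⟨1, i2⟩ 2 h12]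
      show ((0:ℕ) * _ + ![a₁,a₂,a₃] 1 * _
        + ![![0, l₁₂, l₁₃], ![0, 0, l₂₃], ![0, 0, 0]] 1 2 * _)^2 = _
      simp [p2seq]
    · rw [expand, tmBlkInner a₁ a₂ a₃ M _ 0 n _ ih1, tmBlkInner a₁ a₂ a₃ M _ 1 n _ ih2,
        tmBlkInner a₁ a₂ a₃ M _ 2 n _ ih3,
        tmBlkDiag a₁ a₂ a₃ l₁₂ l₁₃ l₂₃ M hM 2 i2,
        tmBlkLow a₁ a₂ a₃ l₁₂ l₁₃ l₂₃ M hM 2 0 (by decide) i2,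
        tmBlkLow a₁ a₂ a₃ l₁₂ l₁₃ l₂₃ M hM 2 1 (by decide) i2]
      show ((0:ℕ) * _ + (0:ℕ) * _ + ![a₁,a₂,a₃] 2 * _)^2 = _
      simp [p3seq]

include hM in
lemma sum_treeP (n : ℕ) : ∑ p : (i : Fin 3) × Fin (![a₁, a₂, a₃] i), treeP 2 M n p
    = a₁ * p1seq a₁ a₂ a₃ l₁₂ l₁₃ l₂₃ n + a₂ * p2seq a₂ a₃ l₂₃ n + a₃ * p3seq a₃ n := by
  obtain ⟨h1, h2, h3⟩ := treeP_eq a₁ a₂ a₃ l₁₂ l₁₃ l₂₃ M hM n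
  rw [← Finset.univ_sigma_univ, Finset.sum_sigma, Fin.sum_univ_three]
  simp only [h1, h2, h3, Finset.sum_const, Finset.card_univ, Fintype.card_fin, smul_eq_mul]
  norm_num [Matrix.cons_val_zero, Matrix.cons_val_one, Matrix.head_cons]
  exact Or.inl rfl

end Combinatorics

section BasicFacts

lemma deltaCard_two (n : ℕ) : deltaCard 2 n = 2^(n+1) - 1 := by
  induction n with
  | zero => rfl
  | succ n ih =>
    have h2 : 1 ≤ 2^(n+1) := Nat.one_le_two_pow
    unfold deltaCard at *
    rw [Finset.sum_range_succ, ih, pow_succ]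
    omega

lemma p3seq_eq (a₃ : ℕ) (n : ℕ) : p3seq a₃ n = a₃ ^ (2^(n+1) - 2) := by
  induction n with
  | zero => simp [p3seq]
  | succ n ih =>
    have h2 : 2 ≤ 2^(n+1) := Nat.one_lt_two_pow_iff.mpr (by omega)
    rw [p3seq, ih, ← pow_succ']
    rw [← pow_mul]
    congr 1
    have : 2^(n+2) = 2 * 2^(n+1) := by ring
    omega

variable (a₁ a₂ a₃ l₁₂ l₁₃ l₂₃ : ℕ) (ha₃ : 0 < a₃)

include ha₃ in
lemma p2_cast (n : ℕ) :
    (p2seq a₂ a₃ l₂₃ n : ℝ) = Yseq a₂ a₃ l₂₃ n * (p3seq a₃ n : ℝ) := by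
  induction n with
  | zero => simp [p2seq, p3seq, Yseq]
  | succ n ih =>
    have h3 : (0:ℝ) < a₃ := by exact_mod_cast ha₃
    rw [p2seq, Yseq, p3seq]
    push_cast
    rw [ih]
    field_simp

include ha₃ in
lemma p1_cast (n : ℕ) :
    (p1seq a₁ a₂ a₃ l₁₂ l₁₃ l₂₃ n : ℝ)
      = Xseq a₁ a₂ a₃ l₁₂ l₁₃ l₂₃ n * (p3seq a₃ n : ℝ) := by
  induction n with
  | zero => simp [p1seq, p3seq, Xseq]
  | succ n ih =>
    have h3 : (0:ℝ) < a₃ := by exact_mod_cast ha₃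
    rw [p1seq, Xseq, p3seq]
    push_cast
    rw [ih, p2_cast a₂ a₃ l₂₃ ha₃]
    field_simp

lemma pseq_bounds (hl₁₂ : l₁₂ ≤ a₂) (hl₁₃ : l₁₃ ≤ a₃) (hl₂₃ : l₂₃ ≤ a₃) : ∀ n,
    p1seq a₁ a₂ a₃ l₁₂ l₁₃ l₂₃ n ≤ (a₁+a₂+a₃)^(2^(n+1)-2)
    ∧ p2seq a₂ a₃ l₂₃ n ≤ (a₁+a₂+a₃)^(2^(n+1)-2)
    ∧ p3seq a₃ n ≤ (a₁+a₂+a₃)^(2^(n+1)-2) := by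
  intro n
  set C := a₁+a₂+a₃ with hC
  induction n with
  | zero => simp [p1seq, p2seq, p3seq]
  | succ n ih =>
    obtain ⟨ih1, ih2, ih3⟩ := ih
    have h2 : 2 ≤ 2^(n+1) := Nat.one_lt_two_pow_iff.mpr (by omega)
    set e := 2^(n+1)-2 with he
    have hexp : 2^(n+2)-2 = 2*e+2 := by
      have : 2^(n+2) = 2 * 2^(n+1) := by ring
      omega
    have key : ∀ s : ℕ, s ≤ C * C^e → s^2 ≤ C^(2^(n+2)-2) := by
      intro s hs
      calc s^2 ≤ (C * C^e)^2 := Nat.pow_le_pow_left hs 2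
        _ = C^(2*e+2) := by ring
        _ = C^(2^(n+2)-2) := by rw [hexp]
    refine ⟨?_, ?_, ?_⟩
    · rw [p1seq]
      apply key
      calc a₁ * p1seq a₁ a₂ a₃ l₁₂ l₁₃ l₂₃ n + l₁₂ * p2seq a₂ a₃ l₂₃ n + l₁₃ * p3seq a₃ n
          ≤ a₁ * C^e + l₁₂ * C^e + l₁₃ * C^e := by
            gcongr
        _ = (a₁ + l₁₂ + l₁₃) * C^e := by ring
        _ ≤ C * C^e := by gcongr <;> omega
    · rw [p2seq]
      apply key
      calc a₂ * p2seq a₂ a₃ l₂₃ n + l₂₃ * p3seq a₃ n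
          ≤ a₂ * C^e + l₂₃ * C^e := by gcongr
        _ = (a₂ + l₂₃) * C^e := by ring
        _ ≤ C * C^e := by gcongr <;> omega
    · rw [p3seq]
      apply key
      calc a₃ * p3seq a₃ n ≤ a₃ * C^e := by gcongr
        _ ≤ C * C^e := by gcongr <;> omega

end BasicFacts

section GrowthLimsup

lemma growth_log (c : ℝ) (hc : 0 < c) (hc1 : c ≤ 1) (X : ℕ → ℝ)
    (hX1 : ∀ n, 1 ≤ X n) (hrec : ∀ n, (c * X n)^2 ≤ X (n+1))
    (htop : Tendsto X atTop atTop) :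
    ∃ N, ∀ m, (2:ℝ)^m ≤ Real.log (X (N + m)) := by
  obtain ⟨N, hN⟩ := (htop.eventually (eventually_ge_atTop (Real.exp 1 / c^2))).exists
  refine ⟨N, fun m => ?_⟩
  have hlogc : Real.log c ≤ 0 := Real.log_nonpos hc.le hc1
  have key : ∀ m, (2:ℝ)^m ≤ Real.log (X (N + m)) + 2 * Real.log c := by
    intro m
    induction m with
    | zero =>
      have hx : Real.exp 1 ≤ X N * c^2 := by
        rw [div_le_iff₀ (by positivity)] at hN
        linarith
      have := Real.log_le_log (Real.exp_pos 1) hx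
      rw [Real.log_exp, Real.log_mul (by nlinarith [Real.exp_pos 1, sq_nonneg c]) (by positivity),
        Real.log_pow] at this
      simpa using this.trans_eq (by ring)
    | succ m ih =>
      have hXpos : 0 < X (N + m) := lt_of_lt_of_le one_pos (hX1 _)
      have h1 : Real.log ((c * X (N+m))^2) ≤ Real.log (X (N + m + 1)) :=
        Real.log_le_log (by positivity) (hrec _)
      rw [Real.log_pow, Real.log_mul (ne_of_gt hc) (ne_of_gt hXpos)] at h1
      have h2 : (2:ℝ)^(m+1) = 2 * (2:ℝ)^m := by ring
      rw [h2]
      push_cast at h1 ⊢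
      have hNm : N + (m+1) = N + m + 1 := by ring
      rw [hNm]
      nlinarith
  have := key m
  linarith

lemma aux_limsup (t : ℕ → ℝ) (B A c : ℝ) (hc : 0 < c) (hB : ∀ n, t n ≤ B)
    (h : ∀ᶠ n in atTop, A + c ≤ t n) : A < Filter.limsup t atTop := by
  have hle : A + c ≤ Filter.limsup t atTop :=
    Filter.le_limsup_of_frequently_le h.frequently
      ⟨B, Filter.eventually_map.2 (Filter.Eventually.of_forall hB)⟩
  linarith

lemma limsup_gt (a₃ : ℕ) (t : ℕ → ℝ) (B : ℝ) (htB : ∀ n, t n ≤ B)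
    (Z : ℕ → ℝ) (N : ℕ) (hZ : ∀ m, (2:ℝ)^m ≤ Real.log (Z (N+m)))
    (hlow : ∀ n, Real.log a₃ + (Real.log (Z n) - Real.log a₃)/((2:ℝ)^(n+1) - 1) ≤ t n) :
    Real.log a₃ < Filter.limsup t atTop := by
  apply aux_limsup t B (Real.log a₃) ((1:ℝ)/2^(N+2)) (by positivity) htB
  have hpowtop : Tendsto (fun n : ℕ => (2:ℝ)^n) atTop atTop :=
    tendsto_pow_atTop_atTop_of_one_lt one_lt_two
  filter_upwards [eventually_ge_atTop N, hpowtop.eventually_ge_atTop ((2:ℝ)^(N+1) * Real.log a₃)]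
    with n hnN hpow
  have hZn : (2:ℝ)^(n-N) ≤ Real.log (Z n) := by
    have := hZ (n - N)
    rwa [Nat.add_sub_cancel' hnN] at this
  have hsplit : (2:ℝ)^(n-N) * 2^N = 2^n := by
    rw [← pow_add]
    congr 1
    omega
  have hPpos : (0:ℝ) < 2^n := by positivity
  have hNpos : (0:ℝ) < 2^N := by positivity
  have hN1pos : (0:ℝ) < 2^(N+1) := by positivity
  have hD : ((2:ℝ)^(n+1) - 1) = 2 * 2^n - 1 := by ring
  have h1n : (1:ℝ) ≤ 2^n := one_le_pow₀ one_le_two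
  have hDpos : (0:ℝ) < (2:ℝ)^(n+1) - 1 := by
    rw [hD]; nlinarith
  have hq : (2:ℝ)^n / 2^(N+1) ≤ Real.log (Z n) - Real.log a₃ := by
    have h1 : Real.log a₃ ≤ (2:ℝ)^n / 2^(N+1) := by
      rw [le_div_iff₀ hN1pos]; nlinarith
    have h2 : (2:ℝ)^n / 2^N = 2 * ((2:ℝ)^n / 2^(N+1)) := by
      field_simp; ring
    have h3 : (2:ℝ)^n / 2^N ≤ Real.log (Z n) := by
      rw [div_le_iff₀ hNpos, ← hsplit]; nlinarith
    nlinarith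
  have hfin : (1:ℝ)/2^(N+2) ≤ (Real.log (Z n) - Real.log a₃) / ((2:ℝ)^(n+1) - 1) := by
    rw [le_div_iff₀ hDpos]
    have hD2 : ((2:ℝ)^(n+1) - 1) ≤ 2 * 2^n := by rw [hD]; linarith
    have e1 : (1:ℝ)/2^(N+2) * (2 * 2^n) = (2:ℝ)^n / 2^(N+1) := by
      field_simp; ring
    have e2 : (0:ℝ) < (1:ℝ)/2^(N+2) := by positivity
    nlinarith
  linarith [hlow n]

end GrowthLimsup

section SeqAnalysis

lemma sq_div_le (A3 u v : ℝ) (h3 : 0 < A3) (hu : 0 ≤ u) (huv : u ≤ v) :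
    (u/A3)^2 ≤ (v/A3)^2 :=
  pow_le_pow_left₀ (by positivity) (by gcongr) 2

variable (A2 A3 L23 : ℝ) (h3 : 0 < A3) (hA2 : 1 ≤ A2) (hL23 : 0 ≤ L23) (hrow : A3 ≤ A2 + L23)

include h3 hA2 hL23 hrow in
lemma Yge1 : ∀ n, 1 ≤ Yseq A2 A3 L23 n := by
  intro n
  induction n with
  | zero => simp [Yseq]
  | succ n ih =>
    have h1 : 1 ≤ (A2 * Yseq A2 A3 L23 n + L23) / A3 := by
      rw [le_div_iff₀ h3]; nlinarith
    rw [Yseq]; nlinarith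

include h3 hA2 hL23 hrow in
lemma Ymono : Monotone (Yseq A2 A3 L23) := by
  apply monotone_nat_of_le_succ
  intro n
  induction n with
  | zero =>
    have := Yge1 A2 A3 L23 h3 hA2 hL23 hrow 1
    simpa [Yseq] using this
  | succ n ih =>
    have hy := Yge1 A2 A3 L23 h3 hA2 hL23 hrow n
    show Yseq A2 A3 L23 (n+1) ≤ Yseq A2 A3 L23 (n+2)
    rw [Yseq, Yseq]
    exact sq_div_le A3 _ _ h3 (by nlinarith) (by nlinarith)

include h3 hA2 hL23 hrow in
lemma Yle_fixed (xm : ℝ) (hxm1 : 1 ≤ xm) (hfix : ((A2 * xm + L23) / A3)^2 = xm) :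
    ∀ n, Yseq A2 A3 L23 n ≤ xm := by
  intro n
  induction n with
  | zero => simpa [Yseq] using hxm1
  | succ n ih =>
    have hy := Yge1 A2 A3 L23 h3 hA2 hL23 hrow n
    rw [Yseq, ← hfix]
    exact sq_div_le A3 _ _ h3 (by nlinarith) (by nlinarith)

include h3 hA2 hL23 hrow in
lemma Ylimit_fixed (L : ℝ) (hT : Tendsto (Yseq A2 A3 L23) atTop (𝓝 L)) :
    1 ≤ L ∧ ((A2 * L + L23) / A3)^2 = L := by
  constructor
  · exact le_of_tendsto_of_tendsto tendsto_const_nhds hT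
      (Filter.Eventually.of_forall (Yge1 A2 A3 L23 h3 hA2 hL23 hrow))
  · have h1 : Tendsto (fun n => Yseq A2 A3 L23 (n+1)) atTop (𝓝 L) :=
      hT.comp (tendsto_add_atTop_nat 1)
    have h2 : Tendsto (fun n => ((A2 * Yseq A2 A3 L23 n + L23) / A3)^2) atTop
        (𝓝 (((A2 * L + L23) / A3)^2)) :=
      (((hT.const_mul A2).add_const L23).div_const A3).pow 2
    have heq : ∀ n, Yseq A2 A3 L23 (n+1) = ((A2 * Yseq A2 A3 L23 n + L23) / A3)^2 :=
      fun n => rfl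
    exact tendsto_nhds_unique (by simpa [← heq] using h2) h1

include h3 hA2 hL23 hrow in
lemma Ytop (hno : ¬ ∃ x : ℝ, 1 ≤ x ∧ ((A2 * x + L23) / A3)^2 = x) :
    Tendsto (Yseq A2 A3 L23) atTop atTop := by
  by_cases hb : BddAbove (Set.range (Yseq A2 A3 L23))
  · exfalso
    have hT := tendsto_atTop_ciSup (Ymono A2 A3 L23 h3 hA2 hL23 hrow) hb
    obtain ⟨h1, h2⟩ := Ylimit_fixed A2 A3 L23 h3 hA2 hL23 hrow _ hT
    exact hno ⟨_, h1, h2⟩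
  · apply tendsto_atTop_atTop_of_monotone (Ymono A2 A3 L23 h3 hA2 hL23 hrow)
    intro b
    obtain ⟨y, ⟨n, rfl⟩, hy⟩ := not_bddAbove_iff.mp hb b
    exact ⟨n, hy.le⟩

include h3 hA2 hL23 hrow in
lemma Yto_xm (xm : ℝ) (hxm : IsLeast {x : ℝ | 1 ≤ x ∧ ((A2 * x + L23) / A3)^2 = x} xm) :
    Tendsto (Yseq A2 A3 L23) atTop (𝓝 xm) := by
  obtain ⟨⟨hxm1, hxmfix⟩, hleast⟩ := hxm
  have hb : BddAbove (Set.range (Yseq A2 A3 L23)) :=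
    ⟨xm, by rintro y ⟨n, rfl⟩; exact Yle_fixed A2 A3 L23 h3 hA2 hL23 hrow xm hxm1 hxmfix n⟩
  have hT := tendsto_atTop_ciSup (Ymono A2 A3 L23 h3 hA2 hL23 hrow) hb
  obtain ⟨h1, h2⟩ := Ylimit_fixed A2 A3 L23 h3 hA2 hL23 hrow _ hT
  have hle : (⨆ n, Yseq A2 A3 L23 n) ≤ xm :=
    ciSup_le fun n => Yle_fixed A2 A3 L23 h3 hA2 hL23 hrow xm hxm1 hxmfix n
  have heq : xm = ⨆ n, Yseq A2 A3 L23 n := le_antisymm (hleast ⟨h1, h2⟩) hle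
  rwa [heq]

include h3 hA2 hL23 in
lemma Yrec_ge (n : ℕ) (hy : 0 ≤ Yseq A2 A3 L23 n) :
    ((A2/A3) * Yseq A2 A3 L23 n)^2 ≤ Yseq A2 A3 L23 (n+1) := by
  show _ ≤ ((A2 * Yseq A2 A3 L23 n + L23) / A3)^2
  have heq : (A2/A3) * Yseq A2 A3 L23 n = (A2 * Yseq A2 A3 L23 n) / A3 := by ring
  rw [heq]
  exact sq_div_le A3 _ _ h3 (by nlinarith) (by nlinarith)

end SeqAnalysis

section XAnalysis
variable (A1 A2 A3 L12 L13 L23 : ℝ) (h3 : 0 < A3) (hA1 : 1 ≤ A1) (hA2 : 1 ≤ A2)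
  (hL12 : 0 ≤ L12) (hL13 : 0 ≤ L13) (hL23 : 0 ≤ L23)
  (hrow1 : A3 ≤ A1 + L12 + L13) (hrow2 : A3 ≤ A2 + L23)

include h3 hA1 hA2 hL12 hL13 hL23 hrow1 hrow2 in
lemma Xge1 : ∀ n, 1 ≤ Xseq A1 A2 A3 L12 L13 L23 n := by
  intro n
  induction n with
  | zero => simp [Xseq]
  | succ n ih =>
    have hy := Yge1 A2 A3 L23 h3 hA2 hL23 hrow2 n
    have h1 : 1 ≤ (A1 * Xseq A1 A2 A3 L12 L13 L23 n + L12 * Yseq A2 A3 L23 n + L13) / A3 := by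
      rw [le_div_iff₀ h3]; nlinarith
    rw [Xseq]; nlinarith

include h3 hA1 hA2 hL12 hL13 hL23 hrow1 hrow2 in
lemma Xmono : Monotone (Xseq A1 A2 A3 L12 L13 L23) := by
  apply monotone_nat_of_le_succ
  intro n
  induction n with
  | zero =>
    have := Xge1 A1 A2 A3 L12 L13 L23 h3 hA1 hA2 hL12 hL13 hL23 hrow1 hrow2 1
    simpa [Xseq] using this
  | succ n ih =>
    have hx := Xge1 A1 A2 A3 L12 L13 L23 h3 hA1 hA2 hL12 hL13 hL23 hrow1 hrow2 n
    have hy := Yge1 A2 A3 L23 h3 hA2 hL23 hrow2 n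
    have hym : Yseq A2 A3 L23 n ≤ Yseq A2 A3 L23 (n+1) :=
      Ymono A2 A3 L23 h3 hA2 hL23 hrow2 (Nat.le_succ n)
    show Xseq A1 A2 A3 L12 L13 L23 (n+1) ≤ Xseq A1 A2 A3 L12 L13 L23 (n+2)
    rw [Xseq, Xseq]
    exact sq_div_le A3 _ _ h3 (by nlinarith) (by nlinarith)

include h3 hA1 hA2 hL12 hL13 hL23 hrow1 hrow2 in
lemma Xle_fixed (xm xs : ℝ) (hxm1 : 1 ≤ xm) (hxmfix : ((A2 * xm + L23) / A3)^2 = xm)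
    (hxs1 : 1 ≤ xs) (hxsfix : ((A1 * xs + L12 * xm + L13) / A3)^2 = xs) :
    ∀ n, Xseq A1 A2 A3 L12 L13 L23 n ≤ xs := by
  intro n
  induction n with
  | zero => simpa [Xseq] using hxs1
  | succ n ih =>
    have hx := Xge1 A1 A2 A3 L12 L13 L23 h3 hA1 hA2 hL12 hL13 hL23 hrow1 hrow2 n
    have hy := Yge1 A2 A3 L23 h3 hA2 hL23 hrow2 n
    have hym : Yseq A2 A3 L23 n ≤ xm := Yle_fixed A2 A3 L23 h3 hA2 hL23 hrow2 xm hxm1 hxmfix n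
    rw [Xseq, ← hxsfix]
    exact sq_div_le A3 _ _ h3 (by nlinarith) (by nlinarith)

include h3 hA1 hA2 hL12 hL13 hL23 hrow1 hrow2 in
lemma Xtop (xm : ℝ) (hxm : IsLeast {x : ℝ | 1 ≤ x ∧ ((A2 * x + L23) / A3)^2 = x} xm)
    (hno : ¬ ∃ x : ℝ, 1 ≤ x ∧ ((A1 * x + L12 * xm + L13) / A3)^2 = x) :
    Tendsto (Xseq A1 A2 A3 L12 L13 L23) atTop atTop := by
  have hYxm := Yto_xm A2 A3 L23 h3 hA2 hL23 hrow2 xm hxm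
  by_cases hb : BddAbove (Set.range (Xseq A1 A2 A3 L12 L13 L23))
  · exfalso
    have hT := tendsto_atTop_ciSup (Xmono A1 A2 A3 L12 L13 L23 h3 hA1 hA2 hL12 hL13 hL23 hrow1 hrow2) hb
    set L := ⨆ n, Xseq A1 A2 A3 L12 L13 L23 n with hL
    have h1 : 1 ≤ L := le_of_tendsto_of_tendsto tendsto_const_nhds hT
      (Filter.Eventually.of_forall (Xge1 A1 A2 A3 L12 L13 L23 h3 hA1 hA2 hL12 hL13 hL23 hrow1 hrow2))
    have hsh : Tendsto (fun n => Xseq A1 A2 A3 L12 L13 L23 (n+1)) atTop (𝓝 L) :=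
      hT.comp (tendsto_add_atTop_nat 1)
    have h2 : Tendsto (fun n => ((A1 * Xseq A1 A2 A3 L12 L13 L23 n + L12 * Yseq A2 A3 L23 n + L13) / A3)^2)
        atTop (𝓝 (((A1 * L + L12 * xm + L13) / A3)^2)) :=
      ((((hT.const_mul A1).add (hYxm.const_mul L12)).add_const L13).div_const A3).pow 2
    have heq : ∀ n, Xseq A1 A2 A3 L12 L13 L23 (n+1)
        = ((A1 * Xseq A1 A2 A3 L12 L13 L23 n + L12 * Yseq A2 A3 L23 n + L13) / A3)^2 := fun n => rfl
    have hfix : ((A1 * L + L12 * xm + L13) / A3)^2 = L :=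
      tendsto_nhds_unique (by simpa [← heq] using h2) hsh
    exact hno ⟨L, h1, hfix⟩
  · apply tendsto_atTop_atTop_of_monotone (Xmono A1 A2 A3 L12 L13 L23 h3 hA1 hA2 hL12 hL13 hL23 hrow1 hrow2)
    intro b
    obtain ⟨y, ⟨n, rfl⟩, hy⟩ := not_bddAbove_iff.mp hb b
    exact ⟨n, hy.le⟩

include h3 hA1 hA2 hL12 hL13 hL23 hrow1 hrow2 in
lemma Xrec_ge (n : ℕ) :
    ((A1/A3) * Xseq A1 A2 A3 L12 L13 L23 n)^2 ≤ Xseq A1 A2 A3 L12 L13 L23 (n+1) := by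
  have hy := Yge1 A2 A3 L23 h3 hA2 hL23 hrow2 n
  show _ ≤ ((A1 * Xseq A1 A2 A3 L12 L13 L23 n + L12 * Yseq A2 A3 L23 n + L13) / A3)^2
  have heq : (A1/A3) * Xseq A1 A2 A3 L12 L13 L23 n = (A1 * Xseq A1 A2 A3 L12 L13 L23 n) / A3 := by ring
  rw [heq]
  have hx := Xge1 A1 A2 A3 L12 L13 L23 h3 hA1 hA2 hL12 hL13 hL23 hrow1 hrow2 n
  exact sq_div_le A3 _ _ h3 (by nlinarith) (by nlinarith)

end XAnalysis

/-! ### Main theorem -/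
set_option maxHeartbeats 1000000 in

/-- **Theorem 3.5.** Case `d = 2`, three irreducible components `E_{a₁}, E_{a₂}, E_{a₃}`,
with `a₁ + l₁₂ + l₁₃ > a₃` and `a₂ + l₂₃ > a₃`.  Let `f(x) = ((a₂x + l₂₃)/a₃)²`.
If `f` has no fixed point in `[1,∞)`, then `h(T_M) > log a₃`.  If it does, let `x₋` be
its smallest fixed point in `[1,∞)` and `g(x) = ((a₁x + l₁₂x₋ + l₁₃)/a₃)²`; then
`h(T_M) > log a₃` if `g` has no fixed point in `[1,∞)`, and `h(T_M) = log a₃` otherwise. -/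
theorem treeEntropy_three_blocks_classification (a₁ a₂ a₃ l₁₂ l₁₃ l₂₃ : ℕ)
    (ha₁ : 1 ≤ a₁) (ha₂ : 1 ≤ a₂) (h₁₃ : a₁ < a₃) (h₂₃ : a₂ < a₃)
    (hl₁₂ : l₁₂ ≤ a₂) (hl₁₃ : l₁₃ ≤ a₃) (hl₂₃ : l₂₃ ≤ a₃)
    (hrow₁ : a₃ < a₁ + l₁₂ + l₁₃) (hrow₂ : a₃ < a₂ + l₂₃)
    (M : Matrix ((i : Fin 3) × Fin (![a₁, a₂, a₃] i)) ((i : Fin 3) × Fin (![a₁, a₂, a₃] i)) ℕ)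
    (hM : IsBlockMat ![a₁, a₂, a₃] ![![0, l₁₂, l₁₃], ![0, 0, l₂₃], ![0, 0, 0]] M) :
    ((¬ ∃ x : ℝ, 1 ≤ x ∧ (((a₂ : ℝ) * x + l₂₃) / a₃) ^ 2 = x) →
      treeEntropy 2 M > Real.log a₃) ∧
    (∀ xm : ℝ, IsLeast {x : ℝ | 1 ≤ x ∧ (((a₂ : ℝ) * x + l₂₃) / a₃) ^ 2 = x} xm →
      ((¬ ∃ x : ℝ, 1 ≤ x ∧ (((a₁ : ℝ) * x + l₁₂ * xm + l₁₃) / a₃) ^ 2 = x) →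
        treeEntropy 2 M > Real.log a₃) ∧
      ((∃ x : ℝ, 1 ≤ x ∧ (((a₁ : ℝ) * x + l₁₂ * xm + l₁₃) / a₃) ^ 2 = x) →
        treeEntropy 2 M = Real.log a₃)) := by
  have ha₃2 : 2 ≤ a₃ := by omega
  have h3 : (0:ℝ) < (a₃:ℝ) := by exact_mod_cast Nat.lt_of_lt_of_le Nat.zero_lt_two ha₃2
  have hA1 : (1:ℝ) ≤ (a₁:ℝ) := by exact_mod_cast ha₁
  have hA2 : (1:ℝ) ≤ (a₂:ℝ) := by exact_mod_cast ha₂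
  have hL12 : (0:ℝ) ≤ (l₁₂:ℝ) := Nat.cast_nonneg _
  have hL13 : (0:ℝ) ≤ (l₁₃:ℝ) := Nat.cast_nonneg _
  have hL23 : (0:ℝ) ≤ (l₂₃:ℝ) := Nat.cast_nonneg _
  have hrow1R : (a₃:ℝ) ≤ (a₁:ℝ) + l₁₂ + l₁₃ := by exact_mod_cast hrow₁.le
  have hrow2R : (a₃:ℝ) ≤ (a₂:ℝ) + l₂₃ := by exact_mod_cast hrow₂.le
  set X := Xseq (a₁:ℝ) (a₂:ℝ) (a₃:ℝ) (l₁₂:ℝ) (l₁₃:ℝ) (l₂₃:ℝ) with hXdef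
  set Y := Yseq (a₂:ℝ) (a₃:ℝ) (l₂₃:ℝ) with hYdef
  set t : ℕ → ℝ := fun n =>
    Real.log (∑ i, treeP 2 M n i) / (deltaCard 2 n : ℝ) with htdef
  have hE : treeEntropy 2 M = Filter.limsup t atTop := rfl
  have hScast : ∀ n, ((∑ i, treeP 2 M n i : ℕ) : ℝ)
      = ∑ i : (i : Fin 3) × Fin (![a₁, a₂, a₃] i), ((treeP 2 M n i : ℕ):ℝ) := fun n => by
    push_cast; rfl
  have ht' : ∀ n, t n = Real.log ((∑ i, treeP 2 M n i : ℕ):ℝ) / (deltaCard 2 n : ℝ) := by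
    intro n
    simp only [htdef]
    rw [hScast n]
  have hYge1 : ∀ n, 1 ≤ Y n := Yge1 (a₂:ℝ) (a₃:ℝ) (l₂₃:ℝ) h3 hA2 hL23 hrow2R
  have hXge1 : ∀ n, 1 ≤ X n := Xge1 (a₁:ℝ) (a₂:ℝ) (a₃:ℝ) (l₁₂:ℝ) (l₁₃:ℝ) (l₂₃:ℝ) h3 hA1 hA2 hL12 hL13 hL23 hrow1R hrow2R
  have hSnat : ∀ n, (∑ i, treeP 2 M n i)
      = a₁ * p1seq a₁ a₂ a₃ l₁₂ l₁₃ l₂₃ n + a₂ * p2seq a₂ a₃ l₂₃ n + a₃ * p3seq a₃ n :=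
    sum_treeP a₁ a₂ a₃ l₁₂ l₁₃ l₂₃ M hM
  have hD2 : ∀ n : ℕ, 2 ≤ 2^(n+1) := fun n => Nat.one_lt_two_pow_iff.mpr (by omega)
  have hDr : ∀ n : ℕ, ((deltaCard 2 n : ℕ) : ℝ) = 2^(n+1) - 1 := by
    intro n
    rw [deltaCard_two, Nat.cast_sub Nat.one_le_two_pow]
    push_cast
    ring
  have hDrpos : ∀ n : ℕ, (0:ℝ) < (2:ℝ)^(n+1) - 1 := by
    intro n
    have : (1:ℝ) ≤ 2^(n+1) := one_le_pow₀ one_le_two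
    have h2n : (2:ℝ) ≤ 2^(n+1) := by
      calc (2:ℝ) = 2^1 := by ring
        _ ≤ 2^(n+1) := pow_le_pow_right₀ one_le_two (by omega)
    linarith
  have hDpos : ∀ n : ℕ, (0:ℝ) < (deltaCard 2 n : ℝ) := fun n => by
    rw [hDr n]; exact hDrpos n
  have hp3r : ∀ n, (p3seq a₃ n : ℝ) = (a₃:ℝ)^(2^(n+1)-2 : ℕ) := by
    intro n; rw [p3seq_eq]; push_cast; ring
  have hp3pos : ∀ n, (0:ℝ) < (p3seq a₃ n : ℝ) := fun n => by
    rw [hp3r n]; positivity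
  have hlogp3 : ∀ n, Real.log (p3seq a₃ n : ℝ) = ((2:ℝ)^(n+1) - 2) * Real.log a₃ := by
    intro n
    rw [hp3r n, Real.log_pow]
    congr 1
    rw [Nat.cast_sub (hD2 n)]
    push_cast
    ring
  have hla : (0:ℝ) ≤ Real.log a₃ := Real.log_nonneg (by exact_mod_cast (by omega : 1 ≤ a₃))
  -- key lower bound for t
  have hlowkey : ∀ (n : ℕ) (pn : ℕ) (Z : ℝ), 1 ≤ Z → pn ≤ (∑ i, treeP 2 M n i) →
      ((pn:ℝ) = Z * (p3seq a₃ n : ℝ)) →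
      Real.log a₃ + (Real.log Z - Real.log a₃)/((2:ℝ)^(n+1) - 1) ≤ t n := by
    intro n pn Z hZ hle hcast
    have hpn : (0:ℝ) < (pn:ℝ) := by rw [hcast]; nlinarith [hp3pos n]
    have hlog1 : Real.log (pn:ℝ) = Real.log Z + ((2:ℝ)^(n+1)-2) * Real.log a₃ := by
      rw [hcast, Real.log_mul (by linarith) (ne_of_gt (hp3pos n)), hlogp3 n]
    have hlogle : Real.log (pn:ℝ) ≤ Real.log ((∑ i, treeP 2 M n i : ℕ):ℝ) :=
      Real.log_le_log hpn (by exact_mod_cast hle)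
    have hform : Real.log (pn:ℝ) / ((2:ℝ)^(n+1)-1)
        = Real.log a₃ + (Real.log Z - Real.log a₃)/((2:ℝ)^(n+1) - 1) := by
      rw [hlog1]
      have hne : ((2:ℝ)^(n+1)-1) ≠ 0 := ne_of_gt (hDrpos n)
      field_simp
      ring
    rw [← hform, ht' n, hDr n]
    exact div_le_div_of_nonneg_right hlogle (hDrpos n).le
  -- upper bound (boundedness)
  have htB : ∀ n, t n ≤ Real.log ((a₁+a₂+a₃ : ℕ):ℝ) := by
    intro n
    have hb := pseq_bounds a₁ a₂ a₃ l₁₂ l₁₃ l₂₃ hl₁₂ hl₁₃ hl₂₃ n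
    have hSle : (∑ i, treeP 2 M n i) ≤ (a₁+a₂+a₃)^(2^(n+1)-1) := by
      rw [hSnat n]
      have h1 : a₁ * p1seq a₁ a₂ a₃ l₁₂ l₁₃ l₂₃ n + a₂ * p2seq a₂ a₃ l₂₃ n + a₃ * p3seq a₃ n
          ≤ (a₁+a₂+a₃) * (a₁+a₂+a₃)^(2^(n+1)-2) := by
        calc a₁ * p1seq a₁ a₂ a₃ l₁₂ l₁₃ l₂₃ n + a₂ * p2seq a₂ a₃ l₂₃ n + a₃ * p3seq a₃ n
            ≤ a₁ * (a₁+a₂+a₃)^(2^(n+1)-2) + a₂ * (a₁+a₂+a₃)^(2^(n+1)-2)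
              + a₃ * (a₁+a₂+a₃)^(2^(n+1)-2) := by gcongr; exact hb.1; exact hb.2.1; exact hb.2.2
          _ = (a₁+a₂+a₃) * (a₁+a₂+a₃)^(2^(n+1)-2) := by ring
      calc _ ≤ (a₁+a₂+a₃) * (a₁+a₂+a₃)^(2^(n+1)-2) := h1
        _ = (a₁+a₂+a₃)^(2^(n+1)-2+1) := by rw [pow_succ]; ring
        _ = (a₁+a₂+a₃)^(2^(n+1)-1) := by congr 1; have := hD2 n; omega
    have hC1 : (1:ℝ) ≤ ((a₁+a₂+a₃ : ℕ):ℝ) := by exact_mod_cast (by omega : 1 ≤ a₁+a₂+a₃)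
    have hS1 : (1:ℝ) ≤ (∑ i, treeP 2 M n i : ℕ) := by
      have : (1:ℕ) ≤ a₃ * p3seq a₃ n := by
        have := hp3pos n
        have hp3n : 1 ≤ p3seq a₃ n := by
          by_contra h
          push_neg at h
          interval_cases (p3seq a₃ n) <;> simp_all
        calc (1:ℕ) = 1 * 1 := rfl
          _ ≤ a₃ * p3seq a₃ n := Nat.mul_le_mul (by omega) hp3n
      have hle2 : (1:ℕ) ≤ ∑ i, treeP 2 M n i := by
        rw [hSnat n]; omega
      exact_mod_cast hle2
    have hlog : Real.log (∑ i, treeP 2 M n i : ℕ)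
        ≤ (deltaCard 2 n : ℝ) * Real.log ((a₁+a₂+a₃ : ℕ):ℝ) := by
      have := Real.log_le_log (by linarith) (show ((∑ i, treeP 2 M n i : ℕ):ℝ) ≤ (((a₁+a₂+a₃)^(2^(n+1)-1) : ℕ):ℝ) by exact_mod_cast hSle)
      rw [Nat.cast_pow, Real.log_pow] at this
      apply this.trans
      rw [deltaCard_two]
    rw [ht' n, div_le_iff₀ (hDpos n)]
    calc Real.log ((∑ i, treeP 2 M n i : ℕ):ℝ) ≤ (deltaCard 2 n : ℝ) * Real.log ((a₁+a₂+a₃:ℕ):ℝ) := hlog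
      _ = Real.log ((a₁+a₂+a₃:ℕ):ℝ) * (deltaCard 2 n : ℝ) := by ring
  -- constant lower bound
  have htlowc : ∀ n, Real.log a₃ ≤ t n := by
    intro n
    have hSge : a₃^(2^(n+1)-1) ≤ (∑ i, treeP 2 M n i) := by
      rw [hSnat n, p3seq_eq]
      have : a₃^(2^(n+1)-1) = a₃ * a₃^(2^(n+1)-2) := by
        rw [← pow_succ']
        congr 1
        have := hD2 n
        omega
      rw [this]
      omega
    have hpow : (0:ℝ) < ((a₃^(2^(n+1)-1) : ℕ):ℝ) := by
      push_cast
      positivity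
    have hlog : (deltaCard 2 n : ℝ) * Real.log a₃ ≤ Real.log (∑ i, treeP 2 M n i : ℕ) := by
      have := Real.log_le_log hpow (show ((a₃^(2^(n+1)-1) : ℕ):ℝ) ≤ ((∑ i, treeP 2 M n i : ℕ):ℝ) by exact_mod_cast hSge)
      rw [Nat.cast_pow, Real.log_pow] at this
      apply le_trans _ this
      rw [deltaCard_two]
    rw [ht' n, le_div_iff₀ (hDpos n)]
    linarith [hlog]
  constructor
  · -- case (a)
    intro hno
    have hYtop : Tendsto Y atTop atTop := Ytop (a₂:ℝ) (a₃:ℝ) (l₂₃:ℝ) h3 hA2 hL23 hrow2R hno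
    have hYrec : ∀ n, (((a₂:ℝ)/(a₃:ℝ)) * Y n)^2 ≤ Y (n+1) := fun n =>
      Yrec_ge (a₂:ℝ) (a₃:ℝ) (l₂₃:ℝ) h3 hA2 hL23 n (le_trans zero_le_one (hYge1 n))
    obtain ⟨N, hZ⟩ := growth_log ((a₂:ℝ)/(a₃:ℝ)) (by positivity)
      (by rw [div_le_one h3]; exact_mod_cast h₂₃.le) Y hYge1 hYrec hYtop
    rw [gt_iff_lt, hE]
    apply limsup_gt a₃ t _ htB Y N hZ
    intro n
    apply hlowkey n (p2seq a₂ a₃ l₂₃ n) (Y n) (hYge1 n) _ (p2_cast a₂ a₃ l₂₃ (by omega) n)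
    rw [hSnat n]
    calc p2seq a₂ a₃ l₂₃ n ≤ a₂ * p2seq a₂ a₃ l₂₃ n := Nat.le_mul_of_pos_left _ (by omega)
      _ ≤ a₁ * p1seq a₁ a₂ a₃ l₁₂ l₁₃ l₂₃ n + a₂ * p2seq a₂ a₃ l₂₃ n := Nat.le_add_left _ _
      _ ≤ _ := Nat.le_add_right _ _
  · intro xm hxm
    constructor
    · -- case (b)(i)
      intro hno
      have hXtop : Tendsto X atTop atTop :=
        Xtop (a₁:ℝ) (a₂:ℝ) (a₃:ℝ) (l₁₂:ℝ) (l₁₃:ℝ) (l₂₃:ℝ) h3 hA1 hA2 hL12 hL13 hL23 hrow1R hrow2R xm hxm hno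
      have hXrec : ∀ n, (((a₁:ℝ)/(a₃:ℝ)) * X n)^2 ≤ X (n+1) := fun n =>
        Xrec_ge (a₁:ℝ) (a₂:ℝ) (a₃:ℝ) (l₁₂:ℝ) (l₁₃:ℝ) (l₂₃:ℝ) h3 hA1 hA2 hL12 hL13 hL23 hrow1R hrow2R n
      obtain ⟨N, hZ⟩ := growth_log ((a₁:ℝ)/(a₃:ℝ)) (by positivity)
        (by rw [div_le_one h3]; exact_mod_cast h₁₃.le) X hXge1 hXrec hXtop
      rw [gt_iff_lt, hE]
      apply limsup_gt a₃ t _ htB X N hZ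
      intro n
      apply hlowkey n (p1seq a₁ a₂ a₃ l₁₂ l₁₃ l₂₃ n) (X n) (hXge1 n) _
        (p1_cast a₁ a₂ a₃ l₁₂ l₁₃ l₂₃ (by omega) n)
      rw [hSnat n]
      calc p1seq a₁ a₂ a₃ l₁₂ l₁₃ l₂₃ n ≤ a₁ * p1seq a₁ a₂ a₃ l₁₂ l₁₃ l₂₃ n :=
            Nat.le_mul_of_pos_left _ (by omega)
        _ ≤ a₁ * p1seq a₁ a₂ a₃ l₁₂ l₁₃ l₂₃ n + a₂ * p2seq a₂ a₃ l₂₃ n := Nat.le_add_right _ _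
        _ ≤ _ := Nat.le_add_right _ _
    · -- case (b)(ii)
      rintro ⟨xs, hxs1, hxsfix⟩
      obtain ⟨⟨hxm1, hxmfix⟩, -⟩ := hxm
      have hYle : ∀ n, Y n ≤ xm := Yle_fixed (a₂:ℝ) (a₃:ℝ) (l₂₃:ℝ) h3 hA2 hL23 hrow2R xm hxm1 hxmfix
      have hXle : ∀ n, X n ≤ xs :=
        Xle_fixed (a₁:ℝ) (a₂:ℝ) (a₃:ℝ) (l₁₂:ℝ) (l₁₃:ℝ) (l₂₃:ℝ) h3 hA1 hA2 hL12 hL13 hL23 hrow1R hrow2R xm xs hxm1 hxmfix hxs1 hxsfix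
      set K := (a₁:ℝ)*xs + (a₂:ℝ)*xm + (a₃:ℝ) with hKdef
      have hK1 : (1:ℝ) ≤ K := by
        have := hXge1 0
        have := hYge1 0
        nlinarith [hXle 0, hYle 0]
      have hupper : ∀ n, t n ≤ Real.log a₃ + Real.log K / (deltaCard 2 n : ℝ) := by
        intro n
        have hSr : ((∑ i, treeP 2 M n i : ℕ):ℝ)
            = ((a₁:ℝ)*X n + (a₂:ℝ)*Y n + (a₃:ℝ)) * (p3seq a₃ n :ℝ) := by
          rw [hSnat n]
          push_cast
          rw [p1_cast a₁ a₂ a₃ l₁₂ l₁₃ l₂₃ (by omega) n, p2_cast a₂ a₃ l₂₃ (by omega) n]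
          ring
        have hargpos : (0:ℝ) < (a₁:ℝ)*X n + (a₂:ℝ)*Y n + (a₃:ℝ) := by
          nlinarith [hXge1 n, hYge1 n]
        have hargK : (a₁:ℝ)*X n + (a₂:ℝ)*Y n + (a₃:ℝ) ≤ K := by
          have h1 : (a₁:ℝ)*X n ≤ (a₁:ℝ)*xs := by nlinarith [hXle n]
          have h2 : (a₂:ℝ)*Y n ≤ (a₂:ℝ)*xm := by nlinarith [hYle n]
          rw [hKdef]; linarith
        have hlogS : Real.log ((∑ i, treeP 2 M n i : ℕ):ℝ)
            ≤ Real.log K + ((2:ℝ)^(n+1) - 2) * Real.log a₃ := by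
          rw [hSr, Real.log_mul (ne_of_gt hargpos) (ne_of_gt (hp3pos n)), hlogp3 n]
          have := Real.log_le_log hargpos hargK
          linarith
        rw [ht' n, div_le_iff₀ (hDpos n)]
        have hexp : (Real.log a₃ + Real.log K / (deltaCard 2 n : ℝ)) * (deltaCard 2 n : ℝ)
            = Real.log a₃ * (deltaCard 2 n : ℝ) + Real.log K := by
          rw [add_mul, div_mul_cancel₀ _ (hDpos n).ne']
        rw [hexp, hDr n]
        have hlogK0 : (0:ℝ) ≤ Real.log K := Real.log_nonneg hK1
        nlinarith [hlogS]
      have hDtop : Tendsto (fun n => ((deltaCard 2 n : ℕ):ℝ)) atTop atTop := by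
        apply tendsto_atTop_mono _ tendsto_natCast_atTop_atTop
        intro n
        have h1 : n < 2^n := Nat.lt_two_pow_self
        have h2 : 2^n ≤ 2^(n+1) := Nat.pow_le_pow_right (by omega) (by omega)
        have : n ≤ deltaCard 2 n := by rw [deltaCard_two]; omega
        exact_mod_cast this
      have hdiv0 : Tendsto (fun n => Real.log K / (deltaCard 2 n : ℝ)) atTop (𝓝 0) :=
        tendsto_const_nhds.div_atTop hDtop
      have hupper' : Tendsto (fun n => Real.log a₃ + Real.log K / (deltaCard 2 n : ℝ))
          atTop (𝓝 (Real.log a₃)) := by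
        simpa using tendsto_const_nhds.add hdiv0
      have hsq : Tendsto t atTop (𝓝 (Real.log a₃)) :=
        tendsto_of_tendsto_of_tendsto_of_le_of_le tendsto_const_nhds hupper' htlowc hupper
      rw [hE]
      exact hsq.limsup_eq
end

section
/- Let d ≥ 2 and let M be an essential k×k matrix with entries in {0,1} (every row and every column of M contains at least one 1). Then the sequence a_n := (d−1)·log(max_{1≤i≤k} p_{M;i}(n))/d^{n+1} is nondecreasing in n and converges to h(T_M); moreover there exists a sequence of real numbers (γ_i)_{i≥0} with 1 ≤ γ_i ≤ k^d for all i such that a_n = Σ_{i=0}^{n} ((d−1)/d^{i+1})·log γ_i for every n ≥ 0. -/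
open Filter Real

lemma treeP_succ (d : ℕ) {ι : Type} [Fintype ι] (M : Matrix ι ι ℕ) (n : ℕ) (i : ι) :
    treeP d M (n+1) i = (∑ j, M i j * treeP d M n j) ^ d := rfl

lemma treeP_pos_s10 {d k : ℕ} (M : Matrix (Fin k) (Fin k) ℕ)
    (hrow : ∀ i, ∃ j, M i j = 1) : ∀ n i, 1 ≤ treeP d M n i := by
  intro n
  induction n with
  | zero => intro i; exact le_refl _
  | succ n ih =>
    intro i
    obtain ⟨j, hj⟩ := hrow i
    have h1 : 1 ≤ ∑ j', M i j' * treeP d M n j' := by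
      calc 1 ≤ M i j * treeP d M n j := by rw [hj, one_mul]; exact ih j
        _ ≤ _ := Finset.single_le_sum (f := fun j' => M i j' * treeP d M n j')
              (fun _ _ => Nat.zero_le _) (Finset.mem_univ j)
    rw [treeP_succ]
    exact Nat.one_le_pow _ _ h1


/-- **Proposition 4.2.** For an essential binary matrix `M`, the sequence
`aₙ = (d−1)·log(maxᵢ p_{M;i}(n))/d^{n+1}` is nondecreasing, converges to `h(T_M)`,
and equals the partial sums `Σ_{i=0}^n ((d−1)/d^{i+1})·log γᵢ` for some
`1 ≤ γᵢ ≤ k^d`. -/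
theorem entropy_series_representation {d k : ℕ} (hd : 2 ≤ d) (hk : 1 ≤ k)
    (M : Matrix (Fin k) (Fin k) ℕ) (hbin : IsBinary M)
    (hrow : ∀ i, ∃ j, M i j = 1) (hcol : ∀ j, ∃ i, M i j = 1) :
    Monotone (fun n =>
      ((d : ℝ) - 1) * Real.log ((Finset.univ.sup (treeP d M n) : ℕ) : ℝ) / (d : ℝ) ^ (n + 1)) ∧
    Filter.Tendsto (fun n =>
        ((d : ℝ) - 1) * Real.log ((Finset.univ.sup (treeP d M n) : ℕ) : ℝ) / (d : ℝ) ^ (n + 1))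
      Filter.atTop (nhds (treeEntropy d M)) ∧
    ∃ γ : ℕ → ℝ, (∀ i, 1 ≤ γ i ∧ γ i ≤ (k : ℝ) ^ d) ∧
      ∀ n, ((d : ℝ) - 1) * Real.log ((Finset.univ.sup (treeP d M n) : ℕ) : ℝ) / (d : ℝ) ^ (n + 1)
        = ∑ i ∈ Finset.range (n + 1), (((d : ℝ) - 1) / (d : ℝ) ^ (i + 1)) * Real.log (γ i) := by
  haveI : NeZero k := ⟨by omega⟩
  set F := (fun n => ((d : ℝ) - 1) * Real.log ((Finset.univ.sup (treeP d M n) : ℕ) : ℝ)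
      / (d : ℝ) ^ (n + 1)) with hF
  set P : ℕ → ℕ := fun n => Finset.univ.sup (treeP d M n) with hPdef
  have hFeq : ∀ n, F n = ((d : ℝ) - 1) * Real.log ((P n : ℕ) : ℝ) / (d : ℝ) ^ (n + 1) :=
    fun n => rfl
  have hpos : ∀ n i, 1 ≤ treeP d M n i := treeP_pos_s10 M hrow
  have hP1 : ∀ n, 1 ≤ P n := fun n =>
    le_trans (hpos n 0) (Finset.le_sup (Finset.mem_univ (0 : Fin k)))
  have hP0 : P 0 = 1 := by
    refine le_antisymm ?_ (hP1 0)
    exact Finset.sup_le fun i _ => le_refl _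
  have hPub : ∀ n i, treeP d M n i ≤ P n := fun n i => Finset.le_sup (Finset.mem_univ i)
  have hlow : ∀ n, P n ^ d ≤ P (n + 1) := by
    intro n
    obtain ⟨j, -, hj⟩ := Finset.exists_mem_eq_sup Finset.univ Finset.univ_nonempty (treeP d M n)
    obtain ⟨i, hi⟩ := hcol j
    have h1 : P n ^ d ≤ treeP d M (n+1) i := by
      rw [treeP_succ]
      apply Nat.pow_le_pow_left
      calc P n = M i j * treeP d M n j := by rw [hi, one_mul]; exact hj
        _ ≤ _ := Finset.single_le_sum (f := fun j' => M i j' * treeP d M n j')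
              (fun _ _ => Nat.zero_le _) (Finset.mem_univ j)
    exact le_trans h1 (hPub (n+1) i)
  have hhigh : ∀ n, P (n + 1) ≤ (k * P n) ^ d := by
    intro n
    apply Finset.sup_le
    intro i _
    rw [treeP_succ]
    apply Nat.pow_le_pow_left
    calc ∑ j', M i j' * treeP d M n j' ≤ ∑ _j' : Fin k, 1 * P n :=
          Finset.sum_le_sum fun j' _ => Nat.mul_le_mul (hbin i j') (hPub n j')
      _ = k * P n := by simp [Finset.sum_const, Finset.card_univ, mul_comm]
  -- real versions
  have hd0 : (d : ℝ) ≠ 0 := by positivity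
  have hR1 : (1:ℝ) < (d:ℝ) := by exact_mod_cast (by omega : 1 < d)
  have hk1 : (1:ℝ) ≤ (k:ℝ) := by exact_mod_cast hk
  set Q : ℕ → ℝ := fun n => ((P n : ℕ) : ℝ) with hQdef
  have hQ1 : ∀ n, (1:ℝ) ≤ Q n := fun n => by simp only [hQdef]; exact_mod_cast hP1 n
  have hQpos : ∀ n, (0:ℝ) < Q n := fun n => lt_of_lt_of_le one_pos (hQ1 n)
  have hQlow : ∀ n, Q n ^ d ≤ Q (n+1) := fun n => by
    simp only [hQdef]; exact_mod_cast hlow n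
  have hQhigh : ∀ n, Q (n+1) ≤ ((k:ℝ) * Q n) ^ d := fun n => by
    simp only [hQdef]; exact_mod_cast hhigh n
  have hQ0 : Q 0 = 1 := by simp only [hQdef, hP0, Nat.cast_one]
  have hFQ : ∀ n, F n = ((d : ℝ) - 1) * Real.log (Q n) / (d : ℝ) ^ (n + 1) := hFeq
  -- gamma
  set γ : ℕ → ℝ := fun i => match i with
    | 0 => (1:ℝ)
    | m+1 => Q (m+1) / Q m ^ d with hγdef
  have hγ0 : γ 0 = 1 := rfl
  have hγs : ∀ m, γ (m+1) = Q (m+1) / Q m ^ d := fun m => rfl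
  have hγbd : ∀ i, 1 ≤ γ i ∧ γ i ≤ (k : ℝ) ^ d := by
    intro i
    match i with
    | 0 =>
      refine ⟨le_refl _, ?_⟩
      calc (1:ℝ) = 1 ^ d := (one_pow d).symm
        _ ≤ (k:ℝ) ^ d := pow_le_pow_left₀ one_pos.le hk1 d
    | m+1 =>
      constructor
      · rw [hγs, le_div_iff₀ (pow_pos (hQpos m) d), one_mul]; exact hQlow m
      · rw [hγs, div_le_iff₀ (pow_pos (hQpos m) d), ← mul_pow]
        exact hQhigh m
  have hγpos : ∀ i, (0:ℝ) < γ i := fun i => lt_of_lt_of_le one_pos (hγbd i).1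
  -- log recursion
  have hlogQ : ∀ m, Real.log (Q (m+1)) = Real.log (γ (m+1)) + (d:ℝ) * Real.log (Q m) := by
    intro m
    have h1 : Q (m+1) = γ (m+1) * Q m ^ d := by
      rw [hγs, div_mul_cancel₀ _ (pow_pos (hQpos m) d).ne']
    rw [h1, Real.log_mul (hγpos (m+1)).ne' (pow_pos (hQpos m) d).ne', Real.log_pow]
  -- partial sum formula
  have hform : ∀ n, F n = ∑ i ∈ Finset.range (n + 1),
      (((d : ℝ) - 1) / (d : ℝ) ^ (i + 1)) * Real.log (γ i) := by
    intro n
    induction n with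
    | zero =>
      rw [hFQ, hQ0, Finset.sum_range_one, hγ0, Real.log_one]
      simp
    | succ n ih =>
      rw [Finset.sum_range_succ, ← ih, hFQ, hFQ, hlogQ n]
      have hdp : ((d:ℝ)) ^ (n+1) ≠ 0 := by positivity
      have hdp2 : ((d:ℝ)) ^ (n+1+1) ≠ 0 := by positivity
      field_simp
      ring
  -- monotone
  have hmono : Monotone F := by
    apply monotone_nat_of_le_succ
    intro n
    have h := Finset.sum_range_succ
      (fun i => (((d : ℝ) - 1) / (d : ℝ) ^ (i + 1)) * Real.log (γ i)) (n+1)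
    rw [hform n, hform (n+1), h]
    have : 0 ≤ (((d : ℝ) - 1) / (d : ℝ) ^ (n + 1 + 1)) * Real.log (γ (n+1)) := by
      apply mul_nonneg
      · apply div_nonneg (by linarith) (by positivity)
      · exact Real.log_nonneg (hγbd (n+1)).1
    linarith
  -- geometric sum bound
  have hgeo : ∀ m, ∑ i ∈ Finset.range m, ((d:ℝ) - 1) / (d:ℝ) ^ (i+1) = 1 - 1/(d:ℝ)^m := by
    intro m
    induction m with
    | zero => simp
    | succ m ih =>
      rw [Finset.sum_range_succ, ih]
      field_simp
      ring
  have hFbd : ∀ n, F n ≤ (d:ℝ) * Real.log k := by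
    intro n
    rw [hform n]
    have hlogk : (0:ℝ) ≤ Real.log k := Real.log_nonneg hk1
    calc ∑ i ∈ Finset.range (n + 1), (((d : ℝ) - 1) / (d : ℝ) ^ (i + 1)) * Real.log (γ i)
        ≤ ∑ i ∈ Finset.range (n + 1), (((d : ℝ) - 1) / (d : ℝ) ^ (i + 1)) * ((d:ℝ) * Real.log k) := by
          apply Finset.sum_le_sum
          intro i _
          apply mul_le_mul_of_nonneg_left _ (div_nonneg (by linarith) (by positivity))
          calc Real.log (γ i) ≤ Real.log ((k:ℝ)^d) :=
                Real.log_le_log (hγpos i) (hγbd i).2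
            _ = (d:ℝ) * Real.log k := by rw [Real.log_pow]
      _ = (∑ i ∈ Finset.range (n + 1), ((d : ℝ) - 1) / (d : ℝ) ^ (i + 1)) * ((d:ℝ) * Real.log k) := by
          rw [Finset.sum_mul]
      _ ≤ 1 * ((d:ℝ) * Real.log k) := by
          apply mul_le_mul_of_nonneg_right _ (by positivity)
          rw [hgeo]
          have : (0:ℝ) < 1/(d:ℝ)^(n+1) := by positivity
          linarith
      _ = (d:ℝ) * Real.log k := one_mul _
  have hbdd : BddAbove (Set.range F) := by
    refine ⟨(d:ℝ) * Real.log k, ?_⟩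
    rintro x ⟨n, rfl⟩
    exact hFbd n
  have hFconv : Tendsto F atTop (nhds (⨆ n, F n)) := tendsto_atTop_ciSup hmono hbdd
  set L : ℝ := ⨆ n, F n with hL
  have hFnonneg : ∀ n, 0 ≤ F n := by
    intro n
    have h0 : F 0 = 0 := by rw [hFQ, hQ0, Real.log_one]; simp
    rw [← h0]; exact hmono (Nat.zero_le n)
  -- the b sequence
  set S : ℕ → ℝ := fun n => ∑ i, ((treeP d M n i : ℕ) : ℝ) with hSdef
  have hSlow : ∀ n, Q n ≤ S n := by
    intro n
    obtain ⟨j, -, hj⟩ := Finset.exists_mem_eq_sup Finset.univ Finset.univ_nonempty (treeP d M n)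
    have : Q n = ((treeP d M n j : ℕ) : ℝ) := by
      simp only [hQdef, hPdef, hj]
    rw [this, hSdef]
    exact Finset.single_le_sum (f := fun i => ((treeP d M n i : ℕ) : ℝ))
      (fun i _ => Nat.cast_nonneg _) (Finset.mem_univ j)
  have hShigh : ∀ n, S n ≤ (k:ℝ) * Q n := by
    intro n
    calc S n ≤ ∑ _i : Fin k, Q n := by
          apply Finset.sum_le_sum
          intro i _
          simp only [hQdef]
          exact_mod_cast hPub n i
      _ = (k:ℝ) * Q n := by simp [Finset.sum_const, Finset.card_univ, mul_comm]
  have hSpos : ∀ n, (0:ℝ) < S n := fun n => lt_of_lt_of_le (hQpos n) (hSlow n)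
  -- deltaCard facts
  set Δ : ℕ → ℝ := fun n => ((deltaCard d n : ℕ) : ℝ) with hΔdef
  have hΔeq : ∀ n, ((d:ℝ) - 1) * Δ n = (d:ℝ)^(n+1) - 1 := by
    intro n
    have : Δ n = ∑ i ∈ Finset.range (n+1), (d:ℝ)^i := by
      simp only [hΔdef, deltaCard]
      push_cast
      rfl
    rw [this, mul_comm, geom_sum_mul]
  have hDpos : ∀ n, (0:ℝ) < (d:ℝ)^(n+1) - 1 := by
    intro n
    have : (1:ℝ) < (d:ℝ)^(n+1) := one_lt_pow₀ hR1 (by omega)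
    linarith
  have hΔpos : ∀ n, (0:ℝ) < Δ n := by
    intro n
    have h := hΔeq n
    have := hDpos n
    nlinarith
  set b : ℕ → ℝ := fun n => Real.log (S n) / Δ n with hbdef
  -- lower bound : F n ≤ b n
  have hFb : ∀ n, F n ≤ b n := by
    intro n
    have hlogP : (0:ℝ) ≤ Real.log (Q n) := Real.log_nonneg (hQ1 n)
    have step1 : F n ≤ ((d:ℝ) - 1) * Real.log (Q n) / ((d:ℝ)^(n+1) - 1) := by
      rw [hFQ]
      apply div_le_div_of_nonneg_left (by nlinarith) (hDpos n)
      linarith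
    have step2 : ((d:ℝ) - 1) * Real.log (Q n) / ((d:ℝ)^(n+1) - 1) = Real.log (Q n) / Δ n := by
      rw [← hΔeq n, mul_div_mul_left _ _ (by linarith : (d:ℝ) - 1 ≠ 0)]
    have step3 : Real.log (Q n) / Δ n ≤ Real.log (S n) / Δ n := by
      gcongr
      · exact hQpos n
      · exact hSlow n
    calc F n ≤ _ := step1
      _ = _ := step2
      _ ≤ b n := step3
  -- upper bound
  set E : ℝ := (d:ℝ) * Real.log k + ((d:ℝ) - 1) * Real.log k with hEdef
  have hbF : ∀ n, b n ≤ F n + E / ((d:ℝ)^(n+1) - 1) := by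
    intro n
    have hD := hDpos n
    have key : ((d:ℝ) - 1) * Real.log (S n) ≤ F n * ((d:ℝ)^(n+1) - 1) + E := by
      have ha : F n * (d:ℝ)^(n+1) = ((d:ℝ) - 1) * Real.log (Q n) := by
        rw [hFQ, div_mul_cancel₀ _ (by positivity : ((d:ℝ))^(n+1) ≠ 0)]
      have h1 : Real.log (S n) ≤ Real.log k + Real.log (Q n) := by
        rw [← Real.log_mul (by positivity) (hQpos n).ne']
        exact Real.log_le_log (hSpos n) (hShigh n)
      have h2 : F n ≤ (d:ℝ) * Real.log k := hFbd n
      have h3 : (0:ℝ) ≤ (d:ℝ) - 1 := by linarith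
      nlinarith [mul_le_mul_of_nonneg_left h1 h3]
    have hb_eq : b n = ((d:ℝ) - 1) * Real.log (S n) / ((d:ℝ)^(n+1) - 1) := by
      rw [hbdef]
      simp only
      rw [← hΔeq n, mul_div_mul_left _ _ (by linarith : (d:ℝ) - 1 ≠ 0)]
    rw [hb_eq]
    rw [div_le_iff₀ hD, add_mul, div_mul_cancel₀ _ hD.ne']
    linarith [key]
  -- epsilon tends to zero
  have hε : Tendsto (fun n => E / ((d:ℝ)^(n+1) - 1)) atTop (nhds 0) := by
    apply Tendsto.div_atTop tendsto_const_nhds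
    apply tendsto_atTop_add_const_right
    exact (tendsto_pow_atTop_atTop_of_one_lt hR1).comp (tendsto_add_atTop_nat 1)
  have hbconv : Tendsto b atTop (nhds L) := by
    have hupper : Tendsto (fun n => F n + E / ((d:ℝ)^(n+1) - 1)) atTop (nhds (L + 0)) :=
      hFconv.add hε
    rw [add_zero] at hupper
    exact tendsto_of_tendsto_of_tendsto_of_le_of_le hFconv hupper hFb hbF
  have hentropy : treeEntropy d M = L := by
    have : treeEntropy d M = Filter.limsup b atTop := rfl
    rw [this]
    exact hbconv.limsup_eq
  refine ⟨hmono, ?_, γ, hγbd, hform⟩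
  rw [hentropy]
  exact hFconv
end
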